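/- arXiv:2010.02624 — 8 statements merged into one kernel-verified Lean document; each statement's English description precedes it below -/
import Mathlib

section
/- Let φ1 > 0, η > 0, χ > 0 and T > 0, and define g3 : ℝ → ℝ by g3(t) = √(φ1 η) · (e^{2t√(φ1/η)}(√(φ1 η) − χ) − e^{2T√(φ1/η)}(√(φ1 η) + χ)) / (e^{2t√(φ1/η)}(√(φ1 η) − χ) + e^{2T√(φ1/η)}(√(φ1 η) + χ)). Then g3(T) = −χ, and for every t ∈ [0, T] the function g3 is differentiable at t with derivative g3'(t) = φ1 − g3(t)²/η; that is, g3 solves the Riccati equation g3' − φ1 + g3²/η = 0 with terminal condition g3(T) = −χ. -/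
open Real

/-- The closed-form `g3` solves the Riccati equation `g3' − φ1 + g3²/η = 0`
with terminal condition `g3(T) = −χ`. -/
theorem g3_solves_riccati (φ1 η χ T : ℝ) (hφ1 : 0 < φ1) (hη : 0 < η) (hχ : 0 < χ)
    (hT : 0 < T) (g3 : ℝ → ℝ)
    (hg3 : ∀ t, g3 t =
      Real.sqrt (φ1 * η) *
        (Real.exp (2 * t * Real.sqrt (φ1 / η)) * (Real.sqrt (φ1 * η) - χ)
          - Real.exp (2 * T * Real.sqrt (φ1 / η)) * (Real.sqrt (φ1 * η) + χ)) /
        (Real.exp (2 * t * Real.sqrt (φ1 / η)) * (Real.sqrt (φ1 * η) - χ)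
          + Real.exp (2 * T * Real.sqrt (φ1 / η)) * (Real.sqrt (φ1 * η) + χ))) :
    g3 T = -χ ∧ ∀ t ∈ Set.Icc (0 : ℝ) T, HasDerivAt g3 (φ1 - (g3 t) ^ 2 / η) t := by
  set k := Real.sqrt (φ1 / η) with hkdef
  set s := Real.sqrt (φ1 * η) with hsdef
  have hk : 0 < k := Real.sqrt_pos.mpr (by positivity)
  have hs : 0 < s := Real.sqrt_pos.mpr (by positivity)
  have hsk : s * k = φ1 := by
    rw [hsdef, hkdef, ← Real.sqrt_mul (by positivity),
      show φ1 * η * (φ1 / η) = φ1 ^ 2 by field_simp]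
    exact Real.sqrt_sq hφ1.le
  have hηk : η * k = s := by
    have h1 : (η * k) ^ 2 = s ^ 2 := by
      rw [mul_pow, hkdef, hsdef, Real.sq_sqrt (by positivity), Real.sq_sqrt (by positivity)]
      field_simp
    nlinarith [mul_pos hη hk, hs]
  have hη' : η = s / k := (eq_div_iff hk.ne').mpr hηk
  have hD : ∀ t, t ≤ T →
      0 < Real.exp (2 * t * k) * (s - χ) + Real.exp (2 * T * k) * (s + χ) := by
    intro t ht
    have hEt := Real.exp_pos (2 * t * k)
    have hET := Real.exp_pos (2 * T * k)
    rcases le_or_gt χ s with h | h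
    · have h1 : 0 ≤ Real.exp (2 * t * k) * (s - χ) :=
        mul_nonneg hEt.le (by linarith)
      nlinarith
    · have hle : Real.exp (2 * t * k) ≤ Real.exp (2 * T * k) :=
        Real.exp_le_exp.mpr (by nlinarith)
      nlinarith
  constructor
  · rw [hg3 T, div_eq_iff (hD T le_rfl).ne']
    ring
  · intro t ht
    have hDt := hD t ht.2
    have h1 : HasDerivAt (fun u : ℝ => 2 * u * k) (2 * k) t := by
      simpa [mul_comm, mul_left_comm, mul_assoc] using (hasDerivAt_id t).const_mul (2 * k)
    have hE : HasDerivAt (fun u : ℝ => Real.exp (2 * u * k))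
        (2 * k * Real.exp (2 * t * k)) t := by
      simpa [mul_comm, Function.comp_def] using (Real.hasDerivAt_exp (2 * t * k)).comp t h1
    have hNum : HasDerivAt
        (fun u : ℝ => s * (Real.exp (2 * u * k) * (s - χ) - Real.exp (2 * T * k) * (s + χ)))
        (s * (2 * k * Real.exp (2 * t * k) * (s - χ))) t :=
      (((hE.mul_const (s - χ)).sub_const _).const_mul s)
    have hDen : HasDerivAt
        (fun u : ℝ => Real.exp (2 * u * k) * (s - χ) + Real.exp (2 * T * k) * (s + χ))
        (2 * k * Real.exp (2 * t * k) * (s - χ)) t :=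
      ((hE.mul_const (s - χ)).add_const _)
    have hdiv := hNum.div hDen hDt.ne'
    have hfun : g3 = fun u =>
        s * (Real.exp (2 * u * k) * (s - χ) - Real.exp (2 * T * k) * (s + χ)) /
          (Real.exp (2 * u * k) * (s - χ) + Real.exp (2 * T * k) * (s + χ)) :=
      funext hg3
    rw [hfun]
    refine hdiv.congr_deriv ?_
    simp only
    rw [← hsk, hη']
    have hD' := hDt.ne'
    rw [mul_right_comm 2 t k, mul_right_comm 2 T k] at hD'
    field_simp
    ring
end

section
/- Let φ1 > 0, η > 0, χ > 0 and T > 0, and define g3 : ℝ → ℝ by g3(t) = √(φ1 η) · (e^{2t√(φ1/η)}(√(φ1 η) − χ) − e^{2T√(φ1/η)}(√(φ1 η) + χ)) / (e^{2t√(φ1/η)}(√(φ1 η) − χ) + e^{2T√(φ1/η)}(√(φ1 η) + χ)). Then g3(t) < 0 for every t ∈ [0, T]; moreover, if √(φ1 η) ≥ χ then g3 is monotone nondecreasing on [0, T]. -/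
open Real

/-- The closed-form Riccati solution `g3` is negative on `[0, T]`, and is monotone
nondecreasing on `[0, T]` whenever `√(φ1 η) ≥ χ`. -/
theorem g3_neg_and_monotone (φ1 η χ T : ℝ) (hφ1 : 0 < φ1) (hη : 0 < η) (hχ : 0 < χ)
    (hT : 0 < T) (g3 : ℝ → ℝ)
    (hg3 : ∀ t, g3 t =
      Real.sqrt (φ1 * η) *
        (Real.exp (2 * t * Real.sqrt (φ1 / η)) * (Real.sqrt (φ1 * η) - χ)
          - Real.exp (2 * T * Real.sqrt (φ1 / η)) * (Real.sqrt (φ1 * η) + χ)) /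
        (Real.exp (2 * t * Real.sqrt (φ1 / η)) * (Real.sqrt (φ1 * η) - χ)
          + Real.exp (2 * T * Real.sqrt (φ1 / η)) * (Real.sqrt (φ1 * η) + χ))) :
    (∀ t ∈ Set.Icc (0 : ℝ) T, g3 t < 0) ∧
    (χ ≤ Real.sqrt (φ1 * η) → MonotoneOn g3 (Set.Icc (0 : ℝ) T)) := by
  set s := Real.sqrt (φ1 * η) with hs_def
  set k := Real.sqrt (φ1 / η) with hk_def
  have hs : 0 < s := Real.sqrt_pos.mpr (mul_pos hφ1 hη)
  have hk : 0 < k := Real.sqrt_pos.mpr (div_pos hφ1 hη)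
  have hET : 0 < Real.exp (2 * T * k) := Real.exp_pos _
  have hEle : ∀ t, t ≤ T → Real.exp (2 * t * k) ≤ Real.exp (2 * T * k) := by
    intro t ht
    exact Real.exp_le_exp.mpr (by nlinarith)
  have hD : ∀ t, t ≤ T →
      0 < Real.exp (2 * t * k) * (s - χ) + Real.exp (2 * T * k) * (s + χ) := by
    intro t ht
    have hEt : 0 < Real.exp (2 * t * k) := Real.exp_pos _
    have := hEle t ht
    nlinarith
  constructor
  · intro t ht
    obtain ⟨ht0, htT⟩ := ht
    rw [hg3 t]
    apply div_neg_of_neg_of_pos _ (hD t htT)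
    have hEt : 0 < Real.exp (2 * t * k) := Real.exp_pos _
    have := hEle t htT
    have hN : Real.exp (2 * t * k) * (s - χ) - Real.exp (2 * T * k) * (s + χ) < 0 := by
      nlinarith
    exact mul_neg_of_pos_of_neg hs hN
  · intro hχs x hx y hy hxy
    rw [hg3 x, hg3 y]
    have hDx := hD x hx.2
    have hDy := hD y hy.2
    rw [div_le_div_iff₀ hDx hDy]
    have hExy : Real.exp (2 * x * k) ≤ Real.exp (2 * y * k) :=
      Real.exp_le_exp.mpr (by nlinarith)
    have key : 0 ≤ s * (Real.exp (2 * T * k) * ((s + χ) * ((s - χ) *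
        (Real.exp (2 * y * k) - Real.exp (2 * x * k))))) := by
      apply mul_nonneg hs.le
      apply mul_nonneg hET.le
      apply mul_nonneg (by linarith)
      exact mul_nonneg (by linarith) (by linarith)
    nlinarith [key]
end

section
/- Let φ1 > 0, η > 0, χ > 0, μ1 > 0 and T > 0, define g3 : ℝ → ℝ by g3(t) = √(φ1 η) · (e^{2t√(φ1/η)}(√(φ1 η) − χ) − e^{2T√(φ1/η)}(√(φ1 η) + χ)) / (e^{2t√(φ1/η)}(√(φ1 η) − χ) + e^{2T√(φ1/η)}(√(φ1 η) + χ)), and define ĝ(r; t) = exp((1/η)·∫_t^r g3(s) ds + μ1·(r − t)). Then for all 0 ≤ t ≤ r ≤ T one has 0 < ĝ(r; t) ≤ e^{μ1 (r − t)}. -/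
open Real

/-- The discount factor `ĝ(r; t) = exp((1/η)·∫_t^r g3 + μ1·(r − t))` satisfies
`0 < ĝ(r; t) ≤ e^{μ1 (r − t)}` for `0 ≤ t ≤ r ≤ T`. -/
theorem ghat_bounds (φ1 η χ μ1 T : ℝ) (hφ1 : 0 < φ1) (hη : 0 < η) (hχ : 0 < χ)
    (hμ1 : 0 < μ1) (hT : 0 < T) (g3 : ℝ → ℝ) (ghat : ℝ → ℝ → ℝ)
    (hg3 : ∀ t, g3 t =
      Real.sqrt (φ1 * η) *
        (Real.exp (2 * t * Real.sqrt (φ1 / η)) * (Real.sqrt (φ1 * η) - χ)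
          - Real.exp (2 * T * Real.sqrt (φ1 / η)) * (Real.sqrt (φ1 * η) + χ)) /
        (Real.exp (2 * t * Real.sqrt (φ1 / η)) * (Real.sqrt (φ1 * η) - χ)
          + Real.exp (2 * T * Real.sqrt (φ1 / η)) * (Real.sqrt (φ1 * η) + χ)))
    (hghat : ∀ t r, ghat r t =
      Real.exp ((1 / η) * (∫ s in t..r, g3 s) + μ1 * (r - t))) :
    ∀ t r : ℝ, 0 ≤ t → t ≤ r → r ≤ T →
      0 < ghat r t ∧ ghat r t ≤ Real.exp (μ1 * (r - t)) := by
  intro t r ht htr hrT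
  have hk : 0 < Real.sqrt (φ1 * η) := Real.sqrt_pos.mpr (by positivity)
  have ha : 0 < Real.sqrt (φ1 / η) := Real.sqrt_pos.mpr (by positivity)
  set k := Real.sqrt (φ1 * η) with hkdef
  set a := Real.sqrt (φ1 / η) with hadef
  -- g3 is nonpositive on (-∞, T]
  have hg3le : ∀ s, s ≤ T → g3 s ≤ 0 := by
    intro s hs
    rw [hg3 s]
    have hes : Real.exp (2 * s * a) ≤ Real.exp (2 * T * a) :=
      Real.exp_le_exp.mpr (by nlinarith [ha])
    have hesp : 0 < Real.exp (2 * s * a) := Real.exp_pos _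
    have heTp : 0 < Real.exp (2 * T * a) := Real.exp_pos _
    apply div_nonpos_of_nonpos_of_nonneg
    · nlinarith [mul_le_mul_of_nonneg_right hes hk.le, mul_pos hesp hχ, mul_pos heTp hχ,
        mul_pos hk (mul_pos hesp hχ), mul_pos hk (mul_pos heTp hχ),
        mul_le_mul_of_nonneg_left (mul_le_mul_of_nonneg_right hes hk.le) hk.le]
    · nlinarith [mul_le_mul_of_nonneg_right hes hχ.le, mul_pos hesp hk, mul_pos heTp hk]
  have hint : (∫ s in t..r, g3 s) ≤ 0 := by
    have h1 : 0 ≤ ∫ s in t..r, -g3 s :=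
      intervalIntegral.integral_nonneg htr
        (fun u hu => neg_nonneg.mpr (hg3le u (le_trans hu.2 hrT)))
    rw [intervalIntegral.integral_neg] at h1
    linarith
  rw [hghat t r]
  refine ⟨Real.exp_pos _, Real.exp_le_exp.mpr ?_⟩
  have : (1 / η) * (∫ s in t..r, g3 s) ≤ 0 :=
    mul_nonpos_of_nonneg_of_nonpos (by positivity) hint
  linarith
end

section
/- Fix real parameters k > 0, σ1 > 0, σ2 > 0, μ1 > 0, ρ ∈ [−1, 1], φ2 ≥ 0, φ3 ≥ 0. Define μ̄(s) = e^{−k s}, σ̄(s)² = (σ2²/(2k))(1 − e^{−2 k s}), and f(r, ε; t) = exp(μ̄(r−t)·ε + σ̄(r−t)²/2 + (ρ/k)·σ1·σ2·(1 − μ̄(r−t))) · (k·μ̄(r−t)·ε + k·σ̄(r−t)² − σ2²/2 − ρ·σ1·σ2·μ̄(r−t) − μ1 + φ2) + φ3. Then for all 0 ≤ t ≤ r and all ε ∈ ℝ: f(r, ε; t) ≥ φ3 − k · exp(−σ̄(r−t)²/2 + σ2²/(2k) − 1 + μ1/k + (ρ/k)·σ1·σ2 − φ2/k). -/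
open Real

theorem key_ineq_mul_exp (y : ℝ) : -Real.exp (-1) ≤ y * Real.exp y := by
  have h := Real.add_one_le_exp (-1 - y)
  have he : Real.exp (-1 - y) * Real.exp y = Real.exp (-1) := by
    rw [← Real.exp_add]; ring_nf
  nlinarith [Real.exp_pos y]

/-- Lower bound for the integrand `f(r, ε; t)` appearing in the representation of
`e^ε(1 − g2(t,ε))`, by the value of `f` at its minimizing `ε`. -/
theorem f_lower_bound (k σ1 σ2 μ1 ρ φ2 φ3 : ℝ)
    (hk : 0 < k) (hσ1 : 0 < σ1) (hσ2 : 0 < σ2) (hμ1 : 0 < μ1)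
    (hρ : ρ ∈ Set.Icc (-1 : ℝ) 1) (hφ2 : 0 ≤ φ2) (hφ3 : 0 ≤ φ3)
    (mubar sigbarSq : ℝ → ℝ) (f : ℝ → ℝ → ℝ → ℝ)
    (hmubar : ∀ s, mubar s = Real.exp (-k * s))
    (hsigbarSq : ∀ s, sigbarSq s = σ2 ^ 2 / (2 * k) * (1 - Real.exp (-2 * k * s)))
    (hf : ∀ r ε t, f r ε t =
      Real.exp (mubar (r - t) * ε + sigbarSq (r - t) / 2
          + (ρ / k) * σ1 * σ2 * (1 - mubar (r - t))) *
        (k * mubar (r - t) * ε + k * sigbarSq (r - t) - σ2 ^ 2 / 2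
          - ρ * σ1 * σ2 * mubar (r - t) - μ1 + φ2) + φ3) :
    ∀ t r : ℝ, 0 ≤ t → t ≤ r → ∀ ε : ℝ,
      f r ε t ≥ φ3 - k * Real.exp (-sigbarSq (r - t) / 2 + σ2 ^ 2 / (2 * k) - 1
        + μ1 / k + (ρ / k) * σ1 * σ2 - φ2 / k) := by
  intro t r ht htr ε
  have hk' : k ≠ 0 := hk.ne'
  rw [hf]
  set m := mubar (r - t) with hm
  set S := sigbarSq (r - t) with hS
  set E := -S / 2 + σ2 ^ 2 / (2 * k) - 1 + μ1 / k + (ρ / k) * σ1 * σ2 - φ2 / k with hE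
  set b := k * m * ε + k * S - σ2 ^ 2 / 2 - ρ * σ1 * σ2 * m - μ1 + φ2 with hb
  have ha : m * ε + S / 2 + (ρ / k) * σ1 * σ2 * (1 - m) = b / k + (E + 1) := by
    rw [hb, hE]; field_simp; ring
  rw [ha]
  have h1 : Real.exp (b / k + (E + 1)) * b
      = k * Real.exp (E + 1) * (b / k * Real.exp (b / k)) := by
    rw [Real.exp_add]; field_simp
  rw [h1]
  have h2 : Real.exp (E + 1) * Real.exp (-1) = Real.exp E := by
    rw [← Real.exp_add]; ring_nf
  have hkey := key_ineq_mul_exp (b / k)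
  nlinarith [Real.exp_pos (E + 1), mul_le_mul_of_nonneg_left hkey
    (le_of_lt (mul_pos hk (Real.exp_pos (E + 1))))]
end

section
/- Fix real parameters k > 0, σ1 > 0, σ2 > 0, μ1 > 0, ρ ∈ [−1, 1], η > 0, φ1 > 0, φ2 ≥ 0, φ3 ≥ 0, χ > 0 and a horizon T > 0, and assume φ3·e^{1 + φ2/k} ≥ k·e^{σ2²/(2k) + μ1/k + (ρ/k)·σ1·σ2}. Define g3(t) = √(φ1 η) · (e^{2t√(φ1/η)}(√(φ1 η) − χ) − e^{2T√(φ1/η)}(√(φ1 η) + χ)) / (e^{2t√(φ1/η)}(√(φ1 η) − χ) + e^{2T√(φ1/η)}(√(φ1 η) + χ)); μ̄(s) = e^{−k s}; σ̄(s)² = (σ2²/(2k))(1 − e^{−2 k s}); ĝ(r; t) = exp((1/η)·∫_t^r g3(s) ds + μ1·(r − t)); and g2(t, ε) = 1 − φ3·e^{−ε}·∫_t^T ĝ(r; t) dr − e^{−ε}·∫_t^T ĝ(r; t)·exp(μ̄(r−t)·ε + σ̄(r−t)²/2 + (ρ/k)·σ1·σ2·(1 − μ̄(r−t)))·(k·μ̄(r−t)·ε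 + k·σ̄(r−t)² − σ2²/2 − ρ·σ1·σ2·μ̄(r−t) − μ1 + φ2) dr. Then g2(t, ε) ≤ 1 for all t ∈ [0, T] and all ε ∈ ℝ. -/
open Real

lemma aux_xexp (u : ℝ) : -Real.exp (-1) ≤ u * Real.exp u := by
  rcases le_or_gt 0 u with h | h
  · nlinarith [Real.exp_pos u, Real.exp_pos (-1 : ℝ)]
  · have h1 : -u ≤ Real.exp (-u - 1) := by
      have := Real.add_one_le_exp (-u - 1); linarith
    have h2 : Real.exp (-u - 1) * Real.exp u = Real.exp (-1) := by
      rw [← Real.exp_add]; ring_nf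
    nlinarith [Real.exp_pos u]

lemma aux_exp_mul (x b : ℝ) : -Real.exp (-b - 1) ≤ Real.exp x * (x + b) := by
  have h := aux_xexp (x + b)
  have h2 : Real.exp (x + b) * Real.exp (-b) = Real.exp x := by
    rw [← Real.exp_add]; ring_nf
  have h3 : Real.exp (-b - 1) = Real.exp (-b) * Real.exp (-1) := by
    rw [← Real.exp_add]; ring_nf
  have h4 := mul_le_mul_of_nonneg_right h (Real.exp_pos (-b : ℝ)).le
  have h5 : (x + b) * Real.exp (x + b) * Real.exp (-b) = Real.exp x * (x + b) := by
    rw [mul_assoc, h2]; ring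
  linarith

lemma aux_pointwise (k σ1 σ2 μ1 ρ φ2 φ3 ε M S : ℝ) (hk : 0 < k) (hS : 0 ≤ S)
    (hcond : φ3 * Real.exp (1 + φ2 / k) ≥
      k * Real.exp (σ2 ^ 2 / (2 * k) + μ1 / k + (ρ / k) * σ1 * σ2)) :
    0 ≤ φ3 + Real.exp (M * ε + S / 2 + (ρ / k) * σ1 * σ2 * (1 - M)) *
      (k * M * ε + k * S - σ2 ^ 2 / 2 - ρ * σ1 * σ2 * M - μ1 + φ2) := by
  set c : ℝ := (ρ / k) * σ1 * σ2 with hc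
  set x : ℝ := M * ε with hx
  set A : ℝ := S / 2 + c * (1 - M) with hA
  set B : ℝ := k * S - σ2 ^ 2 / 2 - ρ * σ1 * σ2 * M - μ1 + φ2 with hB
  set D : ℝ := σ2 ^ 2 / (2 * k) + μ1 / k + c - 1 - φ2 / k with hD
  have h1 : Real.exp (x + A) * (k * x + B) = k * (Real.exp A * (Real.exp x * (x + B / k))) := by
    rw [Real.exp_add]; field_simp
  have h2 := aux_exp_mul x (B / k)
  have h3 : k * (Real.exp A * (-Real.exp (-(B / k) - 1))) ≤
      k * (Real.exp A * (Real.exp x * (x + B / k))) :=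
    mul_le_mul_of_nonneg_left (mul_le_mul_of_nonneg_left h2 (Real.exp_pos A).le) hk.le
  have h4 : Real.exp A * Real.exp (-(B / k) - 1) = Real.exp (A - B / k - 1) := by
    rw [← Real.exp_add]; ring_nf
  have h5 : A - B / k - 1 = D - S / 2 := by
    rw [hA, hB, hD, hc]; field_simp; ring
  have h6 : Real.exp (A - B / k - 1) ≤ Real.exp D := by
    apply Real.exp_le_exp.2; rw [h5]; linarith
  have h7 : k * Real.exp D ≤ φ3 := by
    have e1 : Real.exp (σ2 ^ 2 / (2 * k) + μ1 / k + c) =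
        Real.exp D * Real.exp (1 + φ2 / k) := by
      rw [← Real.exp_add]; congr 1; rw [hD]; ring
    have hp := Real.exp_pos (1 + φ2 / k)
    refine le_of_mul_le_mul_right ?_ hp
    calc k * Real.exp D * Real.exp (1 + φ2 / k)
        = k * Real.exp (σ2 ^ 2 / (2 * k) + μ1 / k + c) := by rw [e1]; ring
      _ ≤ φ3 * Real.exp (1 + φ2 / k) := hcond
  have h8 : k * Real.exp (A - B / k - 1) ≤ φ3 :=
    le_trans (mul_le_mul_of_nonneg_left h6 hk.le) h7
  have goal_eq : M * ε + S / 2 + (ρ / k) * σ1 * σ2 * (1 - M) = x + A := by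
    ring
  have goal_eq2 : k * M * ε + k * S - σ2 ^ 2 / 2 - ρ * σ1 * σ2 * M - μ1 + φ2 = k * x + B := by
    rw [hx, hB]; ring
  rw [goal_eq, goal_eq2, h1]
  have h9 : k * (Real.exp A * -Real.exp (-(B / k) - 1)) = -(k * Real.exp (A - B / k - 1)) := by
    rw [← h4]; ring
  linarith

/-- Proposition 3.1 (inequality part): under condition (51) on the model parameters,
the explicit solution `g2` satisfies `g2(t, ε) ≤ 1` on `[0, T] × ℝ`. -/
theorem g2_le_one (k σ1 σ2 μ1 ρ η φ1 φ2 φ3 χ T : ℝ)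
    (hk : 0 < k) (hσ1 : 0 < σ1) (hσ2 : 0 < σ2) (hμ1 : 0 < μ1)
    (hρ : ρ ∈ Set.Icc (-1 : ℝ) 1) (hη : 0 < η) (hφ1 : 0 < φ1) (hφ2 : 0 ≤ φ2)
    (hφ3 : 0 ≤ φ3) (hχ : 0 < χ) (hT : 0 < T)
    (hcond : φ3 * Real.exp (1 + φ2 / k) ≥
      k * Real.exp (σ2 ^ 2 / (2 * k) + μ1 / k + (ρ / k) * σ1 * σ2))
    (g3 : ℝ → ℝ) (mubar sigbarSq : ℝ → ℝ) (ghat : ℝ → ℝ → ℝ) (g2 : ℝ → ℝ → ℝ)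
    (hg3 : ∀ t, g3 t =
      Real.sqrt (φ1 * η) *
        (Real.exp (2 * t * Real.sqrt (φ1 / η)) * (Real.sqrt (φ1 * η) - χ)
          - Real.exp (2 * T * Real.sqrt (φ1 / η)) * (Real.sqrt (φ1 * η) + χ)) /
        (Real.exp (2 * t * Real.sqrt (φ1 / η)) * (Real.sqrt (φ1 * η) - χ)
          + Real.exp (2 * T * Real.sqrt (φ1 / η)) * (Real.sqrt (φ1 * η) + χ)))
    (hmubar : ∀ s, mubar s = Real.exp (-k * s))
    (hsigbarSq : ∀ s, sigbarSq s = σ2 ^ 2 / (2 * k) * (1 - Real.exp (-2 * k * s)))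
    (hghat : ∀ t r, ghat r t =
      Real.exp ((1 / η) * (∫ s in t..r, g3 s) + μ1 * (r - t)))
    (hg2 : ∀ t ε, g2 t ε =
      1 - φ3 * Real.exp (-ε) * (∫ r in t..T, ghat r t)
        - Real.exp (-ε) * ∫ r in t..T, ghat r t *
            Real.exp (mubar (r - t) * ε + sigbarSq (r - t) / 2
              + (ρ / k) * σ1 * σ2 * (1 - mubar (r - t))) *
            (k * mubar (r - t) * ε + k * sigbarSq (r - t) - σ2 ^ 2 / 2
              - ρ * σ1 * σ2 * mubar (r - t) - μ1 + φ2)) :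
    ∀ t ∈ Set.Icc (0 : ℝ) T, ∀ ε : ℝ, g2 t ε ≤ 1 := by
  -- substitute mubar and sigbarSq
  have hm : mubar = fun s => Real.exp (-k * s) := funext hmubar
  have hs : sigbarSq = fun s => σ2 ^ 2 / (2 * k) * (1 - Real.exp (-2 * k * s)) := funext hsigbarSq
  subst hm hs
  simp only [] at hg2
  intro t ht ε
  obtain ⟨ht0, htT⟩ := ht
  have huIcc : Set.uIcc t T = Set.Icc t T := Set.uIcc_of_le htT
  -- positivity of the denominator of g3 on (-∞, T]
  have ha : 0 < Real.sqrt (φ1 / η) := Real.sqrt_pos.2 (by positivity)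
  have hw : 0 < Real.sqrt (φ1 * η) := Real.sqrt_pos.2 (by positivity)
  have hden : ∀ u ∈ Set.uIcc t T,
      Real.exp (2 * u * Real.sqrt (φ1 / η)) * (Real.sqrt (φ1 * η) - χ)
        + Real.exp (2 * T * Real.sqrt (φ1 / η)) * (Real.sqrt (φ1 * η) + χ) ≠ 0 := by
    intro u hu
    rw [huIcc] at hu
    have huT : u ≤ T := hu.2
    have hle : Real.exp (2 * u * Real.sqrt (φ1 / η)) ≤
        Real.exp (2 * T * Real.sqrt (φ1 / η)) :=
      Real.exp_le_exp.2 (by nlinarith)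
    have hp1 := Real.exp_pos (2 * u * Real.sqrt (φ1 / η))
    have hp2 := Real.exp_pos (2 * T * Real.sqrt (φ1 / η))
    have hpos : 0 < Real.exp (2 * u * Real.sqrt (φ1 / η)) * (Real.sqrt (φ1 * η) - χ)
        + Real.exp (2 * T * Real.sqrt (φ1 / η)) * (Real.sqrt (φ1 * η) + χ) := by
      rcases le_or_gt χ (Real.sqrt (φ1 * η)) with h | h
      · nlinarith [mul_nonneg hp1.le (sub_nonneg.2 h)]
      · nlinarith [mul_le_mul_of_nonneg_right hle
          (by linarith : (0:ℝ) ≤ Real.sqrt (φ1 * η) + χ)]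
    exact hpos.ne'
  -- continuity of g3 on uIcc t T
  have hg3e : g3 = fun u =>
      Real.sqrt (φ1 * η) *
        (Real.exp (2 * u * Real.sqrt (φ1 / η)) * (Real.sqrt (φ1 * η) - χ)
          - Real.exp (2 * T * Real.sqrt (φ1 / η)) * (Real.sqrt (φ1 * η) + χ)) /
        (Real.exp (2 * u * Real.sqrt (φ1 / η)) * (Real.sqrt (φ1 * η) - χ)
          + Real.exp (2 * T * Real.sqrt (φ1 / η)) * (Real.sqrt (φ1 * η) + χ)) :=
    funext hg3
  have hcg3 : ContinuousOn g3 (Set.uIcc t T) := by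
    rw [hg3e]
    exact ContinuousOn.div (by fun_prop) (by fun_prop) hden
  -- continuity of the primitive
  have hG : ContinuousOn (fun r => ∫ s in t..r, g3 s) (Set.uIcc t T) :=
    intervalIntegral.continuousOn_primitive_interval hcg3.integrableOn_uIcc
  -- continuity of ghat
  have hghat_c : ContinuousOn (fun r => ghat r t) (Set.uIcc t T) := by
    have he : (fun r => ghat r t)
        = fun r => Real.exp ((1 / η) * (∫ s in t..r, g3 s) + μ1 * (r - t)) :=
      funext fun r => hghat t r
    rw [he]
    exact Real.continuous_exp.comp_continuousOn
      ((continuousOn_const.mul hG).add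
        (continuousOn_const.mul (continuousOn_id.sub continuousOn_const)))
  -- the second integrand
  set F : ℝ → ℝ := fun r => ghat r t *
      Real.exp (Real.exp (-k * (r - t)) * ε
        + σ2 ^ 2 / (2 * k) * (1 - Real.exp (-2 * k * (r - t))) / 2
        + (ρ / k) * σ1 * σ2 * (1 - Real.exp (-k * (r - t)))) *
      (k * Real.exp (-k * (r - t)) * ε
        + k * (σ2 ^ 2 / (2 * k) * (1 - Real.exp (-2 * k * (r - t)))) - σ2 ^ 2 / 2
        - ρ * σ1 * σ2 * Real.exp (-k * (r - t)) - μ1 + φ2) with hF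
  have hF_c : ContinuousOn F (Set.uIcc t T) := by
    apply ContinuousOn.mul
    · exact hghat_c.mul (Continuous.continuousOn (by fun_prop))
    · exact Continuous.continuousOn (by fun_prop)
  have hii1 : IntervalIntegrable (fun r => ghat r t) MeasureTheory.volume t T :=
    hghat_c.intervalIntegrable
  have hii2 : IntervalIntegrable F MeasureTheory.volume t T :=
    hF_c.intervalIntegrable
  -- pointwise nonnegativity
  have key : ∀ r ∈ Set.Icc t T, 0 ≤ φ3 * ghat r t + F r := by
    intro r hr
    have hg : 0 < ghat r t := by rw [hghat t r]; exact Real.exp_pos _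
    have hS : 0 ≤ σ2 ^ 2 / (2 * k) * (1 - Real.exp (-2 * k * (r - t))) := by
      have h1 : Real.exp (-2 * k * (r - t)) ≤ 1 :=
        Real.exp_le_one_iff.2 (by nlinarith [hr.1])
      have h2 : (0:ℝ) ≤ σ2 ^ 2 / (2 * k) := by positivity
      nlinarith
    have hpt := aux_pointwise k σ1 σ2 μ1 ρ φ2 φ3 ε (Real.exp (-k * (r - t)))
      (σ2 ^ 2 / (2 * k) * (1 - Real.exp (-2 * k * (r - t)))) hk hS hcond
    rw [hF]
    nlinarith [mul_nonneg hg.le hpt]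
  -- main estimate
  rw [hg2 t ε]
  have hsum : φ3 * (∫ r in t..T, ghat r t) + (∫ r in t..T, F r)
      = ∫ r in t..T, (φ3 * ghat r t + F r) := by
    rw [intervalIntegral.integral_add (hii1.const_mul φ3) hii2,
      intervalIntegral.integral_const_mul]
  have hnn : 0 ≤ φ3 * (∫ r in t..T, ghat r t) + (∫ r in t..T, F r) := by
    rw [hsum]
    exact intervalIntegral.integral_nonneg htT key
  nlinarith [Real.exp_pos (-ε), mul_le_mul_of_nonneg_left hnn (Real.exp_pos (-ε)).le]
end

section
/- Fix real parameters k > 0, σ1 > 0, σ2 > 0, μ1 > 0, ρ ∈ [−1, 1], η > 0, φ1 > 0, φ2 ≥ 0, φ3 ≥ 0, χ > 0 and a horizon T > 0. Define g3(t) = √(φ1 η) · (e^{2t√(φ1/η)}(√(φ1 η) − χ) − e^{2T√(φ1/η)}(√(φ1 η) + χ)) / (e^{2t√(φ1/η)}(√(φ1 η) − χ) + e^{2T√(φ1/η)}(√(φ1 η) + χ)); μ̄(s) = e^{−k s}; σ̄(s)² = (σ2²/(2k))(1 − e^{−2 k s}); ĝ(r; t) = exp((1/η)·∫_t^r g3(s)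 ds + μ1·(r − t)); and g2(t, ε) = 1 − φ3·e^{−ε}·∫_t^T ĝ(r; t) dr − e^{−ε}·∫_t^T ĝ(r; t)·exp(μ̄(r−t)·ε + σ̄(r−t)²/2 + (ρ/k)·σ1·σ2·(1 − μ̄(r−t)))·(k·μ̄(r−t)·ε + k·σ̄(r−t)² − σ2²/2 − ρ·σ1·σ2·μ̄(r−t) − μ1 + φ2) dr. Then g2(T, ε) = 1 for all ε ∈ ℝ; and for every (t, ε) ∈ [0, T) × ℝ, the map t ↦ g2(t, ε) is differentiable at t, the map ε ↦ g2(t, ε) is twice differentiable at ε, and ∂_t g2(t,ε) + (σ2²/2)·∂²_ε g2(t,ε) + (σ2² + ρ σ1 σ2 − k ε)·∂_ε g2(t,ε) + (σ2²/2 + ρ σ1 σ2 + μ1 − k ε + g3(t)/η)·g2(t,ε) − φ2 − φ3 e^{−ε} − g3(t)/η = 0. -/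
open Real

open MeasureTheory intervalIntegral


/-- Differentiation under the interval integral sign, continuity version. -/
lemma paramDeriv (F F' : ℝ → ℝ → ℝ) (a b x₀ : ℝ)
    (hF : Continuous fun p : ℝ × ℝ => F p.1 p.2)
    (hF' : Continuous fun p : ℝ × ℝ => F' p.1 p.2)
    (hd : ∀ x r, HasDerivAt (fun y => F y r) (F' x r) x) :
    HasDerivAt (fun x => ∫ r in a..b, F x r) (∫ r in a..b, F' x₀ r) x₀ := by
  obtain ⟨C, hC⟩ := ((isCompact_closedBall x₀ 1).prod isCompact_uIcc).exists_bound_of_continuousOn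
    (hF'.continuousOn (s := Metric.closedBall x₀ 1 ×ˢ Set.uIcc a b))
  have hcont : ∀ x : ℝ, Continuous fun r => F x r := fun x =>
    hF.comp (continuous_const.prodMk continuous_id)
  have hcont' : ∀ x : ℝ, Continuous fun r => F' x r := fun x =>
    hF'.comp (continuous_const.prodMk continuous_id)
  refine (intervalIntegral.hasDerivAt_integral_of_dominated_loc_of_deriv_le
    (F := F) (F' := F') (bound := fun _ => C) (Metric.ball_mem_nhds x₀ one_pos) ?_ ?_ ?_ ?_ ?_ ?_).2
  · exact Filter.Eventually.of_forall fun x => (hcont x).aestronglyMeasurable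
  · exact (hcont x₀).intervalIntegrable a b
  · exact (hcont' x₀).aestronglyMeasurable
  · refine Filter.Eventually.of_forall fun r hr x hx => ?_
    exact hC (x, r) ⟨Metric.ball_subset_closedBall hx, Set.uIoc_subset_uIcc hr⟩
  · exact intervalIntegrable_const
  · exact Filter.Eventually.of_forall fun r _ x _ => hd x r

/-- Derivative in the moving endpoint when the integrand also depends on the parameter. -/
lemma movingDeriv (F : ℝ → ℝ → ℝ) (t₀ : ℝ)
    (hF : Continuous fun p : ℝ × ℝ => F p.1 p.2) :
    HasDerivAt (fun x => ∫ r in t₀..x, F x r) (F t₀ t₀) t₀ := by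
  have hcont : ∀ x : ℝ, Continuous fun r => F x r := fun x =>
    hF.comp (continuous_const.prodMk continuous_id)
  rw [hasDerivAt_iff_isLittleO]
  rw [Asymptotics.isLittleO_iff]
  intro c hc
  obtain ⟨δ, hδ, hcd⟩ := Metric.continuousAt_iff.1 (hF.continuousAt (x := (t₀, t₀))) c hc
  filter_upwards [Metric.ball_mem_nhds t₀ hδ] with x hx
  have hxd : |x - t₀| < δ := by simpa [Real.dist_eq] using hx
  have heq : (∫ r in t₀..x, F x r) - ((x - t₀) • F t₀ t₀) =
      ∫ r in t₀..x, (F x r - F t₀ t₀) := by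
    rw [intervalIntegral.integral_sub ((hcont x).intervalIntegrable _ _)
      intervalIntegrable_const, intervalIntegral.integral_const]
  have hbd : ∀ r ∈ Set.uIoc t₀ x, ‖F x r - F t₀ t₀‖ ≤ c := by
    intro r hr
    have hr' : |r - t₀| ≤ |x - t₀| := by
      rcases Set.mem_uIoc.1 hr with ⟨h1, h2⟩ | ⟨h1, h2⟩ <;>
      · rw [abs_sub_le_iff]
        rcases abs_cases (x - t₀) with ⟨he, h0⟩ | ⟨he, h0⟩ <;> constructor <;> linarith
    have : dist (x, r) (t₀, t₀) < δ := by
      rw [Prod.dist_eq]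
      simp only [Real.dist_eq]
      exact max_lt hxd (lt_of_le_of_lt hr' hxd)
    exact le_of_lt (by simpa [Real.dist_eq] using hcd this)
  calc ‖(∫ r in t₀..x, F x r) - (∫ r in t₀..t₀, F t₀ r) - (x - t₀) • F t₀ t₀‖
      = ‖∫ r in t₀..x, (F x r - F t₀ t₀)‖ := by
        rw [intervalIntegral.integral_same, sub_zero, heq]
    _ ≤ c * |x - t₀| := intervalIntegral.norm_integral_le_of_norm_le_const hbd
    _ = c * ‖x - t₀‖ := by rw [Real.norm_eq_abs]

/-- Derivative of `x ↦ ∫ r in x..c, F x r`. -/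
lemma combinedDeriv (F F' : ℝ → ℝ → ℝ) (c t₀ : ℝ)
    (hF : Continuous fun p : ℝ × ℝ => F p.1 p.2)
    (hF' : Continuous fun p : ℝ × ℝ => F' p.1 p.2)
    (hd : ∀ x r, HasDerivAt (fun y => F y r) (F' x r) x) :
    HasDerivAt (fun x => ∫ r in x..c, F x r)
      ((∫ r in t₀..c, F' t₀ r) - F t₀ t₀) t₀ := by
  have hcont : ∀ x : ℝ, Continuous fun r => F x r := fun x =>
    hF.comp (continuous_const.prodMk continuous_id)
  have key : ∀ x : ℝ, (∫ r in x..c, F x r) =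
      (∫ r in t₀..c, F x r) - ∫ r in t₀..x, F x r :=
    fun x => (intervalIntegral.integral_interval_sub_left
      ((hcont x).intervalIntegrable _ _) ((hcont x).intervalIntegrable _ _)).symm
  have h1 : HasDerivAt (fun x => ∫ r in t₀..c, F x r) (∫ r in t₀..c, F' t₀ r) t₀ :=
    paramDeriv F F' t₀ c t₀ hF hF' hd
  have h2 : HasDerivAt (fun x => ∫ r in t₀..x, F x r) (F t₀ t₀) t₀ := movingDeriv F t₀ hF
  have := h1.sub h2
  refine this.congr_of_eventuallyEq (Filter.Eventually.of_forall fun x => key x)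


noncomputable section PhiDefs

variable (k σ1 σ2 ρ μ1 φ2 : ℝ)

/-- exponent of the Gaussian factor -/
def Wf (y x : ℝ) : ℝ :=
  Real.exp (-k * y) * x + σ2 ^ 2 / (2 * k) * (1 - Real.exp (-2 * k * y)) / 2
    + ρ / k * σ1 * σ2 * (1 - Real.exp (-k * y))

/-- polynomial factor -/
def Pf (y x : ℝ) : ℝ :=
  k * Real.exp (-k * y) * x + k * (σ2 ^ 2 / (2 * k) * (1 - Real.exp (-2 * k * y)))
    - σ2 ^ 2 / 2 - ρ * σ1 * σ2 * Real.exp (-k * y) - μ1 + φ2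

def Phi (y x : ℝ) : ℝ := Real.exp (Wf k σ1 σ2 ρ y x) * Pf k σ1 σ2 ρ μ1 φ2 y x

def Phiy (y x : ℝ) : ℝ :=
  Real.exp (Wf k σ1 σ2 ρ y x) *
    ((-k * Real.exp (-k * y) * x + σ2 ^ 2 / (2 * k) * (2 * k * Real.exp (-2 * k * y)) / 2
        + ρ / k * σ1 * σ2 * (k * Real.exp (-k * y))) * Pf k σ1 σ2 ρ μ1 φ2 y x
      + (-(k * (k * Real.exp (-k * y))) * x + k * (σ2 ^ 2 / (2 * k) * (2 * k * Real.exp (-2 * k * y)))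
        + ρ * σ1 * σ2 * (k * Real.exp (-k * y))))

def Phie (y x : ℝ) : ℝ :=
  Real.exp (Wf k σ1 σ2 ρ y x) *
    (Real.exp (-k * y) * Pf k σ1 σ2 ρ μ1 φ2 y x + k * Real.exp (-k * y))

def Phiee (y x : ℝ) : ℝ :=
  Real.exp (Wf k σ1 σ2 ρ y x) *
    (Real.exp (-k * y) * Real.exp (-k * y) * Pf k σ1 σ2 ρ μ1 φ2 y x
      + 2 * k * (Real.exp (-k * y) * Real.exp (-k * y)))

lemma phi_cont : Continuous fun p : ℝ × ℝ => Phi k σ1 σ2 ρ μ1 φ2 p.1 p.2 := by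
  unfold Phi Wf Pf; fun_prop

lemma phiy_cont : Continuous fun p : ℝ × ℝ => Phiy k σ1 σ2 ρ μ1 φ2 p.1 p.2 := by
  unfold Phiy Wf Pf; fun_prop

lemma phie_cont : Continuous fun p : ℝ × ℝ => Phie k σ1 σ2 ρ μ1 φ2 p.1 p.2 := by
  unfold Phie Wf Pf; fun_prop

lemma phiee_cont : Continuous fun p : ℝ × ℝ => Phiee k σ1 σ2 ρ μ1 φ2 p.1 p.2 := by
  unfold Phiee Wf Pf; fun_prop

lemma hasDerivAt_exp_lin (c y : ℝ) :
    HasDerivAt (fun z : ℝ => Real.exp (c * z)) (Real.exp (c * y) * c) y := by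
  simpa using ((hasDerivAt_id y).const_mul c).exp

lemma hasDerivAt_phi_y (y x : ℝ) :
    HasDerivAt (fun z => Phi k σ1 σ2 ρ μ1 φ2 z x) (Phiy k σ1 σ2 ρ μ1 φ2 y x) y := by
  have h1 : HasDerivAt (fun z : ℝ => Real.exp (-k * z)) (Real.exp (-k * y) * -k) y :=
    hasDerivAt_exp_lin (-k) y
  have h2 : HasDerivAt (fun z : ℝ => Real.exp (-2 * k * z)) (Real.exp (-2 * k * y) * (-2 * k)) y :=
    hasDerivAt_exp_lin (-2 * k) y
  have hW : HasDerivAt (fun z => Wf k σ1 σ2 ρ z x)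
      (Real.exp (-k * y) * -k * x
        + σ2 ^ 2 / (2 * k) * (0 - Real.exp (-2 * k * y) * (-2 * k)) / 2
        + ρ / k * σ1 * σ2 * (0 - Real.exp (-k * y) * -k)) y := by
    have ha : HasDerivAt (fun z : ℝ => Real.exp (-k * z) * x) (Real.exp (-k * y) * -k * x) y :=
      h1.mul_const x
    have hb : HasDerivAt (fun z : ℝ => σ2 ^ 2 / (2 * k) * (1 - Real.exp (-2 * k * z)) / 2)
        (σ2 ^ 2 / (2 * k) * (0 - Real.exp (-2 * k * y) * (-2 * k)) / 2) y :=
      (((hasDerivAt_const y (1:ℝ)).sub h2).const_mul (σ2 ^ 2 / (2 * k))).div_const 2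
    have hc : HasDerivAt (fun z : ℝ => ρ / k * σ1 * σ2 * (1 - Real.exp (-k * z)))
        (ρ / k * σ1 * σ2 * (0 - Real.exp (-k * y) * -k)) y :=
      ((hasDerivAt_const y (1:ℝ)).sub h1).const_mul (ρ / k * σ1 * σ2)
    exact (ha.add hb).add hc
  have hP : HasDerivAt (fun z => Pf k σ1 σ2 ρ μ1 φ2 z x)
      (k * (Real.exp (-k * y) * -k) * x
        + k * (σ2 ^ 2 / (2 * k) * (0 - Real.exp (-2 * k * y) * (-2 * k)))
        - 0 - ρ * σ1 * σ2 * (Real.exp (-k * y) * -k) - 0 + 0) y := by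
    have ha : HasDerivAt (fun z : ℝ => k * Real.exp (-k * z) * x)
        (k * (Real.exp (-k * y) * -k) * x) y := (h1.const_mul k).mul_const x
    have hb : HasDerivAt (fun z : ℝ => k * (σ2 ^ 2 / (2 * k) * (1 - Real.exp (-2 * k * z))))
        (k * (σ2 ^ 2 / (2 * k) * (0 - Real.exp (-2 * k * y) * (-2 * k)))) y :=
      (((hasDerivAt_const y (1:ℝ)).sub h2).const_mul (σ2 ^ 2 / (2 * k))).const_mul k
    have hc : HasDerivAt (fun z : ℝ => ρ * σ1 * σ2 * Real.exp (-k * z))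
        (ρ * σ1 * σ2 * (Real.exp (-k * y) * -k)) y := h1.const_mul (ρ * σ1 * σ2)
    exact (((((ha.add hb).sub_const (σ2 ^ 2 / 2)).sub hc).sub_const μ1).add_const φ2).congr_deriv
      (by ring)
  have := (hW.exp).mul hP
  exact this.congr_deriv (by unfold Phiy; ring)

lemma hasDerivAt_phi_e (y x : ℝ) :
    HasDerivAt (fun w => Phi k σ1 σ2 ρ μ1 φ2 y w) (Phie k σ1 σ2 ρ μ1 φ2 y x) x := by
  have hW : HasDerivAt (fun w => Wf k σ1 σ2 ρ y w) (Real.exp (-k * y) * 1) x := by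
    have := (((hasDerivAt_id x).const_mul (Real.exp (-k * y))).add_const
      (σ2 ^ 2 / (2 * k) * (1 - Real.exp (-2 * k * y)) / 2)).add_const
      (ρ / k * σ1 * σ2 * (1 - Real.exp (-k * y)))
    simpa [Wf] using this
  have hP : HasDerivAt (fun w => Pf k σ1 σ2 ρ μ1 φ2 y w) (k * Real.exp (-k * y) * 1) x := by
    have := (((((hasDerivAt_id x).const_mul (k * Real.exp (-k * y))).add_const
      (k * (σ2 ^ 2 / (2 * k) * (1 - Real.exp (-2 * k * y))))).sub_const (σ2 ^ 2 / 2)).sub_const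
      (ρ * σ1 * σ2 * Real.exp (-k * y))).sub_const μ1 |>.add_const φ2
    simpa [Pf] using this
  have := (hW.exp).mul hP
  exact this.congr_deriv (by unfold Phie; ring)

lemma hasDerivAt_phie_e (y x : ℝ) :
    HasDerivAt (fun w => Phie k σ1 σ2 ρ μ1 φ2 y w) (Phiee k σ1 σ2 ρ μ1 φ2 y x) x := by
  have hW : HasDerivAt (fun w => Wf k σ1 σ2 ρ y w) (Real.exp (-k * y) * 1) x := by
    have := (((hasDerivAt_id x).const_mul (Real.exp (-k * y))).add_const
      (σ2 ^ 2 / (2 * k) * (1 - Real.exp (-2 * k * y)) / 2)).add_const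
      (ρ / k * σ1 * σ2 * (1 - Real.exp (-k * y)))
    simpa [Wf] using this
  have hP : HasDerivAt (fun w => Pf k σ1 σ2 ρ μ1 φ2 y w) (k * Real.exp (-k * y) * 1) x := by
    have := (((((hasDerivAt_id x).const_mul (k * Real.exp (-k * y))).add_const
      (k * (σ2 ^ 2 / (2 * k) * (1 - Real.exp (-2 * k * y))))).sub_const (σ2 ^ 2 / 2)).sub_const
      (ρ * σ1 * σ2 * Real.exp (-k * y))).sub_const μ1 |>.add_const φ2
    simpa [Pf] using this
  have hin : HasDerivAt (fun w => Real.exp (-k * y) * Pf k σ1 σ2 ρ μ1 φ2 y w + k * Real.exp (-k * y))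
      (Real.exp (-k * y) * (k * Real.exp (-k * y) * 1)) x := by
    simpa using (hP.const_mul (Real.exp (-k * y))).add_const (k * Real.exp (-k * y))
  have := (hW.exp).mul ((hP.const_mul (Real.exp (-k * y))).add_const (k * Real.exp (-k * y)))
  exact this.congr_deriv (by unfold Phiee; ring)

lemma phi_key (hk : k ≠ 0) (y x : ℝ) :
    Phiy k σ1 σ2 ρ μ1 φ2 y x =
      σ2 ^ 2 / 2 * Phiee k σ1 σ2 ρ μ1 φ2 y x
        + (ρ * σ1 * σ2 - k * x) * Phie k σ1 σ2 ρ μ1 φ2 y x := by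
  have he2 : Real.exp (-2 * k * y) = Real.exp (-k * y) * Real.exp (-k * y) := by
    rw [← Real.exp_add]; ring_nf
  unfold Phiy Phiee Phie Pf
  rw [he2]
  field_simp
  ring

lemma phi_zero (x : ℝ) (hk : k ≠ 0) :
    Phi k σ1 σ2 ρ μ1 φ2 0 x = Real.exp x * (k * x - σ2 ^ 2 / 2 - ρ * σ1 * σ2 - μ1 + φ2) := by
  unfold Phi Wf Pf
  simp [mul_zero, Real.exp_zero]

end PhiDefs

set_option maxHeartbeats 2000000 in
/-- The explicit formula `g2` is a classical solution of the second parabolic PDE of the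
HJB system, with terminal condition `g2(T, ·) = 1`. -/
theorem g2_solves_pde (k σ1 σ2 μ1 ρ η φ1 φ2 φ3 χ T : ℝ)
    (hk : 0 < k) (hσ1 : 0 < σ1) (hσ2 : 0 < σ2) (hμ1 : 0 < μ1)
    (hρ : ρ ∈ Set.Icc (-1 : ℝ) 1) (hη : 0 < η) (hφ1 : 0 < φ1) (hφ2 : 0 ≤ φ2)
    (hφ3 : 0 ≤ φ3) (hχ : 0 < χ) (hT : 0 < T)
    (g3 : ℝ → ℝ) (mubar sigbarSq : ℝ → ℝ) (ghat : ℝ → ℝ → ℝ) (g2 : ℝ → ℝ → ℝ)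
    (hg3 : ∀ t, g3 t =
      Real.sqrt (φ1 * η) *
        (Real.exp (2 * t * Real.sqrt (φ1 / η)) * (Real.sqrt (φ1 * η) - χ)
          - Real.exp (2 * T * Real.sqrt (φ1 / η)) * (Real.sqrt (φ1 * η) + χ)) /
        (Real.exp (2 * t * Real.sqrt (φ1 / η)) * (Real.sqrt (φ1 * η) - χ)
          + Real.exp (2 * T * Real.sqrt (φ1 / η)) * (Real.sqrt (φ1 * η) + χ)))
    (hmubar : ∀ s, mubar s = Real.exp (-k * s))
    (hsigbarSq : ∀ s, sigbarSq s = σ2 ^ 2 / (2 * k) * (1 - Real.exp (-2 * k * s)))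
    (hghat : ∀ t r, ghat r t =
      Real.exp ((1 / η) * (∫ s in t..r, g3 s) + μ1 * (r - t)))
    (hg2 : ∀ t ε, g2 t ε =
      1 - φ3 * Real.exp (-ε) * (∫ r in t..T, ghat r t)
        - Real.exp (-ε) * ∫ r in t..T, ghat r t *
            Real.exp (mubar (r - t) * ε + sigbarSq (r - t) / 2
              + (ρ / k) * σ1 * σ2 * (1 - mubar (r - t))) *
            (k * mubar (r - t) * ε + k * sigbarSq (r - t) - σ2 ^ 2 / 2
              - ρ * σ1 * σ2 * mubar (r - t) - μ1 + φ2)) :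
    (∀ ε : ℝ, g2 T ε = 1) ∧
    ∀ t ∈ Set.Ico (0 : ℝ) T, ∀ ε : ℝ,
      DifferentiableAt ℝ (fun s => g2 s ε) t ∧
      DifferentiableAt ℝ (fun x => g2 t x) ε ∧
      DifferentiableAt ℝ (deriv (fun x => g2 t x)) ε ∧
      deriv (fun s => g2 s ε) t
        + σ2 ^ 2 / 2 * deriv (deriv (fun x => g2 t x)) ε
        + (σ2 ^ 2 + ρ * σ1 * σ2 - k * ε) * deriv (fun x => g2 t x) ε
        + (σ2 ^ 2 / 2 + ρ * σ1 * σ2 + μ1 - k * ε + g3 t / η) * g2 t ε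
        - φ2 - φ3 * Real.exp (-ε) - g3 t / η = 0 := by
  constructor
  · intro ε
    rw [hg2]
    simp [intervalIntegral.integral_same]
  -- auxiliary constructions
  have hsq : 0 < Real.sqrt (φ1 * η) := Real.sqrt_pos.2 (mul_pos hφ1 hη)
  have hDpos : ∀ u ≤ T, 0 < Real.exp (2 * u * Real.sqrt (φ1 / η)) * (Real.sqrt (φ1 * η) - χ)
      + Real.exp (2 * T * Real.sqrt (φ1 / η)) * (Real.sqrt (φ1 * η) + χ) := by
    intro u hu
    rcases le_or_gt χ (Real.sqrt (φ1 * η)) with h | h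
    · have h1 : 0 ≤ Real.exp (2 * u * Real.sqrt (φ1 / η)) * (Real.sqrt (φ1 * η) - χ) :=
        mul_nonneg (Real.exp_pos _).le (by linarith)
      have h2 : 0 < Real.exp (2 * T * Real.sqrt (φ1 / η)) * (Real.sqrt (φ1 * η) + χ) :=
        mul_pos (Real.exp_pos _) (by linarith)
      linarith
    · have hee : Real.exp (2 * u * Real.sqrt (φ1 / η)) ≤ Real.exp (2 * T * Real.sqrt (φ1 / η)) :=
        Real.exp_le_exp.2 (by nlinarith [Real.sqrt_nonneg (φ1 / η)])
      have h3 : Real.exp (2 * T * Real.sqrt (φ1 / η)) * (Real.sqrt (φ1 * η) - χ)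
          ≤ Real.exp (2 * u * Real.sqrt (φ1 / η)) * (Real.sqrt (φ1 * η) - χ) :=
        mul_le_mul_of_nonpos_right hee (by linarith)
      nlinarith [mul_pos (Real.exp_pos (2 * T * Real.sqrt (φ1 / η))) hsq]
  obtain ⟨g3c, hg3cc, hg3ce⟩ : ∃ f : ℝ → ℝ, Continuous f ∧ ∀ u ≤ T, f u = g3 u := by
    refine ⟨fun u => g3 (min u T), ?_, fun u hu => by simp only [min_eq_left hu]⟩
    have hfun : (fun u => g3 (min u T)) = fun u =>
        Real.sqrt (φ1 * η) *
          (Real.exp (2 * min u T * Real.sqrt (φ1 / η)) * (Real.sqrt (φ1 * η) - χ)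
            - Real.exp (2 * T * Real.sqrt (φ1 / η)) * (Real.sqrt (φ1 * η) + χ)) /
          (Real.exp (2 * min u T * Real.sqrt (φ1 / η)) * (Real.sqrt (φ1 * η) - χ)
            + Real.exp (2 * T * Real.sqrt (φ1 / η)) * (Real.sqrt (φ1 * η) + χ)) :=
      funext fun u => hg3 (min u T)
    rw [hfun]
    apply Continuous.div
    · fun_prop
    · fun_prop
    · intro u
      exact ne_of_gt (hDpos (min u T) (min_le_right u T))
  obtain ⟨L, hLd, hLsub⟩ : ∃ L : ℝ → ℝ, (∀ x, HasDerivAt L (1 / η * g3c x + μ1) x) ∧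
      ∀ u r, u ≤ T → r ≤ T →
        (1 / η) * (∫ s in u..r, g3 s) + μ1 * (r - u) = L r - L u := by
    refine ⟨fun x => 1 / η * (∫ s in (0:ℝ)..x, g3c s) + μ1 * x, fun x => ?_, fun u r hu hr => ?_⟩
    · have h1 := ((hg3cc.integral_hasStrictDerivAt 0 x).hasDerivAt).const_mul (1 / η)
      have h2 := (hasDerivAt_id x).const_mul μ1
      exact (h1.add h2).congr_deriv (by ring)
    · have hcongr : (∫ s in u..r, g3 s) = ∫ s in u..r, g3c s := by
        refine intervalIntegral.integral_congr fun s hs => ?_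
        have hsT : s ≤ T := by
          rcases Set.mem_uIcc.1 hs with ⟨_, h2⟩ | ⟨_, h2⟩ <;> linarith
        exact (hg3ce s hsT).symm
      have hsplit : (∫ s in u..r, g3c s) =
          (∫ s in (0:ℝ)..r, g3c s) - ∫ s in (0:ℝ)..u, g3c s :=
        (intervalIntegral.integral_interval_sub_left (hg3cc.intervalIntegrable 0 r)
          (hg3cc.intervalIntegrable 0 u)).symm
      rw [hcongr, hsplit]
      ring
  have hLdiff : Differentiable ℝ L := fun x => (hLd x).differentiableAt
  have hLc : Continuous L := hLdiff.continuous
  have hexpLc : Continuous fun r => Real.exp (L r) := Real.continuous_exp.comp hLc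
  -- the master pointwise formula
  have hg2c : ∀ u, u ≤ T → ∀ x, g2 u x =
      1 - φ3 * Real.exp (-x) * (Real.exp (-L u) * ∫ r in u..T, Real.exp (L r))
        - Real.exp (-x) * (Real.exp (-L u) *
            ∫ r in u..T, Real.exp (L r) * Phi k σ1 σ2 ρ μ1 φ2 (r - u) x) := by
    intro u hu x
    rw [hg2 u x]
    have e1 : (∫ r in u..T, ghat r u)
        = Real.exp (-L u) * ∫ r in u..T, Real.exp (L r) := by
      rw [← intervalIntegral.integral_const_mul]
      refine intervalIntegral.integral_congr fun r hr => ?_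
      have hrT : r ≤ T := by
        rcases Set.mem_uIcc.1 hr with ⟨_, h2⟩ | ⟨_, h2⟩ <;> linarith
      rw [hghat u r, hLsub u r hu hrT, Real.exp_sub, Real.exp_neg]
      ring
    have e2 : (∫ r in u..T, ghat r u *
          Real.exp (mubar (r - u) * x + sigbarSq (r - u) / 2
            + ρ / k * σ1 * σ2 * (1 - mubar (r - u))) *
          (k * mubar (r - u) * x + k * sigbarSq (r - u) - σ2 ^ 2 / 2
            - ρ * σ1 * σ2 * mubar (r - u) - μ1 + φ2))
        = Real.exp (-L u) * ∫ r in u..T, Real.exp (L r) * Phi k σ1 σ2 ρ μ1 φ2 (r - u) x := by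
      rw [← intervalIntegral.integral_const_mul]
      refine intervalIntegral.integral_congr fun r hr => ?_
      have hrT : r ≤ T := by
        rcases Set.mem_uIcc.1 hr with ⟨_, h2⟩ | ⟨_, h2⟩ <;> linarith
      rw [hghat u r, hLsub u r hu hrT]
      simp only [hmubar, hsigbarSq]
      rw [Real.exp_sub, Real.exp_neg]
      unfold Phi Wf Pf
      ring
    rw [e1, e2]
  intro t ht ε
  obtain ⟨ht0, htT⟩ := ht
  have htle : t ≤ T := htT.le
  have hkne : (k : ℝ) ≠ 0 := hk.ne'
  -- continuity packs
  have hmap1 : Continuous fun p : ℝ × ℝ => (p.2 - p.1, ε) :=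
    (continuous_snd.sub continuous_fst).prodMk continuous_const
  have hmap2 : Continuous fun p : ℝ × ℝ => (p.2 - t, p.1) :=
    (continuous_snd.sub continuous_const).prodMk continuous_fst
  have hmap3 : Continuous fun r : ℝ => (r - t, ε) :=
    (continuous_id.sub continuous_const).prodMk continuous_const
  have hexpL2 : Continuous fun p : ℝ × ℝ => Real.exp (L p.2) :=
    Real.continuous_exp.comp (hLc.comp continuous_snd)
  have hp1 : Continuous fun p : ℝ × ℝ => Phi k σ1 σ2 ρ μ1 φ2 (p.2 - p.1) ε := by
    simpa [Function.comp_def] using (phi_cont k σ1 σ2 ρ μ1 φ2).comp hmap1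
  have hp2 : Continuous fun p : ℝ × ℝ => Phiy k σ1 σ2 ρ μ1 φ2 (p.2 - p.1) ε := by
    simpa [Function.comp_def] using (phiy_cont k σ1 σ2 ρ μ1 φ2).comp hmap1
  have hp3 : Continuous fun p : ℝ × ℝ => Phi k σ1 σ2 ρ μ1 φ2 (p.2 - t) p.1 := by
    simpa [Function.comp_def] using (phi_cont k σ1 σ2 ρ μ1 φ2).comp hmap2
  have hp4 : Continuous fun p : ℝ × ℝ => Phie k σ1 σ2 ρ μ1 φ2 (p.2 - t) p.1 := by
    simpa [Function.comp_def] using (phie_cont k σ1 σ2 ρ μ1 φ2).comp hmap2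
  have hp5 : Continuous fun p : ℝ × ℝ => Phiee k σ1 σ2 ρ μ1 φ2 (p.2 - t) p.1 := by
    simpa [Function.comp_def] using (phiee_cont k σ1 σ2 ρ μ1 φ2).comp hmap2
  have hp6 : Continuous fun r : ℝ => Phie k σ1 σ2 ρ μ1 φ2 (r - t) ε := by
    simpa [Function.comp_def] using (phie_cont k σ1 σ2 ρ μ1 φ2).comp hmap3
  have hp7 : Continuous fun r : ℝ => Phiee k σ1 σ2 ρ μ1 φ2 (r - t) ε := by
    simpa [Function.comp_def] using (phiee_cont k σ1 σ2 ρ μ1 φ2).comp hmap3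
  have hc_phi_t : Continuous fun p : ℝ × ℝ => Real.exp (L p.2) * Phi k σ1 σ2 ρ μ1 φ2 (p.2 - p.1) ε :=
    hexpL2.mul hp1
  have hc_phiy_t : Continuous fun p : ℝ × ℝ => -(Real.exp (L p.2) * Phiy k σ1 σ2 ρ μ1 φ2 (p.2 - p.1) ε) :=
    (hexpL2.mul hp2).neg
  have hc_phi_e : Continuous fun p : ℝ × ℝ => Real.exp (L p.2) * Phi k σ1 σ2 ρ μ1 φ2 (p.2 - t) p.1 :=
    hexpL2.mul hp3
  have hc_phie_e : Continuous fun p : ℝ × ℝ => Real.exp (L p.2) * Phie k σ1 σ2 ρ μ1 φ2 (p.2 - t) p.1 :=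
    hexpL2.mul hp4
  have hc_phiee_e : Continuous fun p : ℝ × ℝ => Real.exp (L p.2) * Phiee k σ1 σ2 ρ μ1 φ2 (p.2 - t) p.1 :=
    hexpL2.mul hp5
  have hc_phie_r : Continuous fun r : ℝ => Real.exp (L r) * Phie k σ1 σ2 ρ μ1 φ2 (r - t) ε :=
    hexpLc.mul hp6
  have hc_phiee_r : Continuous fun r : ℝ => Real.exp (L r) * Phiee k σ1 σ2 ρ μ1 φ2 (r - t) ε :=
    hexpLc.mul hp7
  -- derivative of A in t
  have hA' : HasDerivAt (fun u => ∫ r in u..T, Real.exp (L r)) (-Real.exp (L t)) t :=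
    intervalIntegral.integral_hasDerivAt_left (hexpLc.intervalIntegrable _ _)
      (hexpLc.stronglyMeasurableAtFilter _ _) hexpLc.continuousAt
  -- derivative of B in t
  have hBt : HasDerivAt (fun u => ∫ r in u..T, Real.exp (L r) * Phi k σ1 σ2 ρ μ1 φ2 (r - u) ε)
      ((∫ r in t..T, -(Real.exp (L r) * Phiy k σ1 σ2 ρ μ1 φ2 (r - t) ε))
        - Real.exp (L t) * Phi k σ1 σ2 ρ μ1 φ2 (t - t) ε) t := by
    refine combinedDeriv (fun x r => Real.exp (L r) * Phi k σ1 σ2 ρ μ1 φ2 (r - x) ε)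
      (fun x r => -(Real.exp (L r) * Phiy k σ1 σ2 ρ μ1 φ2 (r - x) ε)) T t hc_phi_t hc_phiy_t ?_
    intro x r
    have h0 : HasDerivAt (fun y : ℝ => r - y) (-1) x := by
      simpa using (hasDerivAt_id x).const_sub r
    have h1 : HasDerivAt (fun y : ℝ => Phi k σ1 σ2 ρ μ1 φ2 (r - y) ε)
        (Phiy k σ1 σ2 ρ μ1 φ2 (r - x) ε * -1) x := by
      simpa [Function.comp_def] using
        (hasDerivAt_phi_y k σ1 σ2 ρ μ1 φ2 (r - x) ε).comp x h0
    have h2 := h1.const_mul (Real.exp (L r))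
    exact h2.congr_deriv (by ring)
  rw [sub_self, phi_zero k σ1 σ2 ρ μ1 φ2 ε hkne, intervalIntegral.integral_neg] at hBt
  -- derivative of B in ε
  have hBparam : ∀ w : ℝ, HasDerivAt
      (fun x => ∫ r in t..T, Real.exp (L r) * Phi k σ1 σ2 ρ μ1 φ2 (r - t) x)
      (∫ r in t..T, Real.exp (L r) * Phie k σ1 σ2 ρ μ1 φ2 (r - t) w) w := by
    intro w
    refine paramDeriv (fun x r => Real.exp (L r) * Phi k σ1 σ2 ρ μ1 φ2 (r - t) x)
      (fun x r => Real.exp (L r) * Phie k σ1 σ2 ρ μ1 φ2 (r - t) x) t T w hc_phi_e hc_phie_e ?_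
    intro x r
    exact (hasDerivAt_phi_e k σ1 σ2 ρ μ1 φ2 (r - t) x).const_mul (Real.exp (L r))
  have hJparam : HasDerivAt
      (fun x => ∫ r in t..T, Real.exp (L r) * Phie k σ1 σ2 ρ μ1 φ2 (r - t) x)
      (∫ r in t..T, Real.exp (L r) * Phiee k σ1 σ2 ρ μ1 φ2 (r - t) ε) ε := by
    refine paramDeriv (fun x r => Real.exp (L r) * Phie k σ1 σ2 ρ μ1 φ2 (r - t) x)
      (fun x r => Real.exp (L r) * Phiee k σ1 σ2 ρ μ1 φ2 (r - t) x) t T ε hc_phie_e hc_phiee_e ?_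
    intro x r
    exact (hasDerivAt_phie_e k σ1 σ2 ρ μ1 φ2 (r - t) x).const_mul (Real.exp (L r))
  -- first ε derivative of g2 t ·, everywhere
  have hRd : ∀ x : ℝ, HasDerivAt (fun x => g2 t x)
      (φ3 * Real.exp (-x) * (Real.exp (-L t) * ∫ r in t..T, Real.exp (L r))
        + Real.exp (-x) * (Real.exp (-L t) * ∫ r in t..T, Real.exp (L r) * Phi k σ1 σ2 ρ μ1 φ2 (r - t) x)
        - Real.exp (-x) * (Real.exp (-L t) * ∫ r in t..T, Real.exp (L r) * Phie k σ1 σ2 ρ μ1 φ2 (r - t) x)) x := by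
    intro x
    have hfe : (fun x => g2 t x) = fun x =>
        1 - φ3 * Real.exp (-x) * (Real.exp (-L t) * ∫ r in t..T, Real.exp (L r))
          - Real.exp (-x) * (Real.exp (-L t) * ∫ r in t..T, Real.exp (L r) * Phi k σ1 σ2 ρ μ1 φ2 (r - t) x) :=
      funext fun x => hg2c t htle x
    rw [hfe]
    have hex : HasDerivAt (fun x : ℝ => Real.exp (-x)) (Real.exp (-x) * -1) x := by
      simpa using ((hasDerivAt_id x).neg).exp
    have h1 := (hex.const_mul φ3).mul_const (Real.exp (-L t) * ∫ r in t..T, Real.exp (L r))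
    have h2 := hex.mul ((hBparam x).const_mul (Real.exp (-L t)))
    have hsum := ((hasDerivAt_const x (1:ℝ)).sub h1).sub h2
    exact hsum.congr_deriv (by ring)
  have hDe_val : deriv (fun x => g2 t x) ε =
      φ3 * Real.exp (-ε) * (Real.exp (-L t) * ∫ r in t..T, Real.exp (L r))
        + Real.exp (-ε) * (Real.exp (-L t) * ∫ r in t..T, Real.exp (L r) * Phi k σ1 σ2 ρ μ1 φ2 (r - t) ε)
        - Real.exp (-ε) * (Real.exp (-L t) * ∫ r in t..T, Real.exp (L r) * Phie k σ1 σ2 ρ μ1 φ2 (r - t) ε) :=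
    (hRd ε).deriv
  have hderiv1 : deriv (fun x => g2 t x) = fun x =>
      φ3 * Real.exp (-x) * (Real.exp (-L t) * ∫ r in t..T, Real.exp (L r))
        + Real.exp (-x) * (Real.exp (-L t) * ∫ r in t..T, Real.exp (L r) * Phi k σ1 σ2 ρ μ1 φ2 (r - t) x)
        - Real.exp (-x) * (Real.exp (-L t) * ∫ r in t..T, Real.exp (L r) * Phie k σ1 σ2 ρ μ1 φ2 (r - t) x) :=
    funext fun x => (hRd x).deriv
  -- second ε derivative
  have hDDR : HasDerivAt (fun x =>
      φ3 * Real.exp (-x) * (Real.exp (-L t) * ∫ r in t..T, Real.exp (L r))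
        + Real.exp (-x) * (Real.exp (-L t) * ∫ r in t..T, Real.exp (L r) * Phi k σ1 σ2 ρ μ1 φ2 (r - t) x)
        - Real.exp (-x) * (Real.exp (-L t) * ∫ r in t..T, Real.exp (L r) * Phie k σ1 σ2 ρ μ1 φ2 (r - t) x))
      (-(φ3 * Real.exp (-ε) * (Real.exp (-L t) * ∫ r in t..T, Real.exp (L r)))
        - Real.exp (-ε) * (Real.exp (-L t) * ∫ r in t..T, Real.exp (L r) * Phi k σ1 σ2 ρ μ1 φ2 (r - t) ε)
        + 2 * (Real.exp (-ε) * (Real.exp (-L t) * ∫ r in t..T, Real.exp (L r) * Phie k σ1 σ2 ρ μ1 φ2 (r - t) ε))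
        - Real.exp (-ε) * (Real.exp (-L t) * ∫ r in t..T, Real.exp (L r) * Phiee k σ1 σ2 ρ μ1 φ2 (r - t) ε)) ε := by
    have hex : HasDerivAt (fun x : ℝ => Real.exp (-x)) (Real.exp (-ε) * -1) ε := by
      simpa using ((hasDerivAt_id ε).neg).exp
    have h1 := (hex.const_mul φ3).mul_const (Real.exp (-L t) * ∫ r in t..T, Real.exp (L r))
    have h2 := hex.mul ((hBparam ε).const_mul (Real.exp (-L t)))
    have h3 := hex.mul (hJparam.const_mul (Real.exp (-L t)))
    have hsum := (h1.add h2).sub h3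
    exact hsum.congr_deriv (by ring)
  have hDee_val : deriv (deriv (fun x => g2 t x)) ε =
      -(φ3 * Real.exp (-ε) * (Real.exp (-L t) * ∫ r in t..T, Real.exp (L r)))
        - Real.exp (-ε) * (Real.exp (-L t) * ∫ r in t..T, Real.exp (L r) * Phi k σ1 σ2 ρ μ1 φ2 (r - t) ε)
        + 2 * (Real.exp (-ε) * (Real.exp (-L t) * ∫ r in t..T, Real.exp (L r) * Phie k σ1 σ2 ρ μ1 φ2 (r - t) ε))
        - Real.exp (-ε) * (Real.exp (-L t) * ∫ r in t..T, Real.exp (L r) * Phiee k σ1 σ2 ρ μ1 φ2 (r - t) ε) := by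
    rw [hderiv1]
    exact hDDR.deriv
  -- t-direction derivative
  have hLneg : HasDerivAt (fun u => Real.exp (-L u))
      (Real.exp (-L t) * -(1 / η * g3c t + μ1)) t := ((hLd t).neg).exp
  have hg2ct : HasDerivAt (fun u =>
      1 - φ3 * Real.exp (-ε) * (Real.exp (-L u) * ∫ r in u..T, Real.exp (L r))
        - Real.exp (-ε) * (Real.exp (-L u) * ∫ r in u..T, Real.exp (L r) * Phi k σ1 σ2 ρ μ1 φ2 (r - u) ε))
      (φ3 * Real.exp (-ε) * Real.exp (-L t) *
          ((1 / η * g3c t + μ1) * (∫ r in t..T, Real.exp (L r)) + Real.exp (L t))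
        + Real.exp (-ε) * Real.exp (-L t) *
          ((1 / η * g3c t + μ1) * (∫ r in t..T, Real.exp (L r) * Phi k σ1 σ2 ρ μ1 φ2 (r - t) ε)
            + (∫ r in t..T, Real.exp (L r) * Phiy k σ1 σ2 ρ μ1 φ2 (r - t) ε))
        + Real.exp (-ε) * Real.exp (-L t) * Real.exp (L t) *
          (Real.exp ε * (k * ε - σ2 ^ 2 / 2 - ρ * σ1 * σ2 - μ1 + φ2))) t := by
    have h1 := hLneg.mul hA'
    have h2 := hLneg.mul hBt
    have hsum := ((hasDerivAt_const t (1:ℝ)).sub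
      (h1.const_mul (φ3 * Real.exp (-ε)))).sub (h2.const_mul (Real.exp (-ε)))
    exact hsum.congr_deriv (by ring)
  have hev : (fun s => g2 s ε) =ᶠ[nhds t] (fun u =>
      1 - φ3 * Real.exp (-ε) * (Real.exp (-L u) * ∫ r in u..T, Real.exp (L r))
        - Real.exp (-ε) * (Real.exp (-L u) * ∫ r in u..T, Real.exp (L r) * Phi k σ1 σ2 ρ μ1 φ2 (r - u) ε)) := by
    filter_upwards [Iio_mem_nhds htT] with s hs
    exact hg2c s hs.le ε
  -- key pointwise integral identity
  have hJkey : (∫ r in t..T, Real.exp (L r) * Phiy k σ1 σ2 ρ μ1 φ2 (r - t) ε)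
      = σ2 ^ 2 / 2 * (∫ r in t..T, Real.exp (L r) * Phiee k σ1 σ2 ρ μ1 φ2 (r - t) ε)
        + (ρ * σ1 * σ2 - k * ε) * ∫ r in t..T, Real.exp (L r) * Phie k σ1 σ2 ρ μ1 φ2 (r - t) ε := by
    rw [← intervalIntegral.integral_const_mul, ← intervalIntegral.integral_const_mul,
      ← intervalIntegral.integral_add
        ((hc_phiee_r.intervalIntegrable _ _).const_mul _)
        ((hc_phie_r.intervalIntegrable _ _).const_mul _)]
    refine intervalIntegral.integral_congr fun r hr => ?_
    rw [phi_key k σ1 σ2 ρ μ1 φ2 hkne (r - t) ε]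
    ring
  refine ⟨(hev.differentiableAt_iff).2 hg2ct.differentiableAt, (hRd ε).differentiableAt, ?_, ?_⟩
  · rw [hderiv1]
    exact hDDR.differentiableAt
  · rw [hev.deriv_eq, hg2ct.deriv, hDe_val, hDee_val, hg2c t htle ε, ← hg3ce t htle, hJkey]
    simp only [Real.exp_neg]
    field_simp
    ring
end

section
/- Fix real parameters k > 0, σ1 > 0, σ2 > 0, μ1 > 0, ρ ∈ [−1, 1], η > 0, φ1 > 0, φ2 ≥ 0, φ3 ≥ 0, χ > 0, a horizon T > 0, and Q̄0 > 0. Define g3(t) = √(φ1 η) · (e^{2t√(φ1/η)}(√(φ1 η) − χ) − e^{2T√(φ1/η)}(√(φ1 η) + χ)) / (e^{2t√(φ1/η)}(√(φ1 η) − χ) + e^{2T√(φ1/η)}(√(φ1 η) + χ)); μ̄(s) = e^{−k s}; σ̄(s)² = (σ2²/(2k))(1 − e^{−2 k s}); ĝ(r; t) = exp((1/η)·∫_t^r g3(s) ds + μ1·(r − t)); g2(t, ε) = 1 − φ3·e^{−ε}·∫_t^T ĝ(r; t) dr − e^{−ε}·∫_t^T ĝ(r; t)·exp(μ̄(r−t)·ε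 + σ̄(r−t)²/2 + (ρ/k)·σ1·σ2·(1 − μ̄(r−t)))·(k·μ̄(r−t)·ε + k·σ̄(r−t)² − σ2²/2 − ρ·σ1·σ2·μ̄(r−t) − μ1 + φ2) dr; and c*(t, a, ε, q) = (1/(2η))·(a·e^ε·(1 − g2(t, ε)) − 2·q·g3(t)) if q > 0, and c*(t, a, ε, 0) = 0. Then there exists a constant C > 0 such that for all t ∈ [0, T], a > 0, ε ∈ ℝ and q ∈ [0, Q̄0]: |c*(t, a, ε, q)| ≤ C·(1 + q)·(1 + a)·(1 + e^{C·|ε|}). -/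
set_option maxHeartbeats 1000000


open Real


private lemma aux_W2 (φ3 G eK1 T k K2 x A : ℝ) (hφ3 : 0 ≤ φ3) (hG : 0 < G)
    (heK1 : 0 < eK1) (hT : 0 < T) (hk : 0 < k) (hK2 : 0 < K2) (hx : 0 ≤ x)
    (hA1 : 1 ≤ A) (hxA : x + 1 ≤ A) :
    φ3 * (G * T) + G * (A * eK1) * (k * x + K2) * T
      ≤ (φ3 * G * T + G * eK1 * T * (k + K2)) * (A * A) := by
  have hlin : k * x + K2 ≤ (k + K2) * A := by nlinarith
  have h1 := mul_le_mul_of_nonneg_left hlin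
    (by positivity : (0:ℝ) ≤ G * eK1 * T * A)
  nlinarith [mul_nonneg (mul_nonneg (mul_nonneg hφ3 hG.le) hT.le)
    (by nlinarith : (0:ℝ) ≤ A * A - 1)]

private lemma aux_final (C a q A E M2 B2 : ℝ) (hC2 : 2 ≤ C) (ha : 0 < a)
    (hq : 0 ≤ q) (hA1 : 1 ≤ A) (hE1 : 1 ≤ E) (hAE : A * A ≤ E)
    (hM2 : 0 ≤ M2) (hM2C : M2 ≤ C) (hB2 : 0 ≤ B2) (hB2C : B2 ≤ C) :
    a * M2 * (A * A) + q * B2 ≤ C * (1 + q) * (1 + a) * (1 + E) := by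
  have hC0 : (0:ℝ) ≤ C := by linarith
  have hE0 : (0:ℝ) ≤ E := by linarith
  have hAA0 : (0:ℝ) ≤ A * A := by nlinarith
  have h1 : a * M2 * (A * A) ≤ a * C * (A * A) := by
    have := mul_le_mul_of_nonneg_right hM2C (mul_nonneg ha.le hAA0)
    nlinarith
  have h2 : a * C * (A * A) ≤ a * C * E :=
    mul_le_mul_of_nonneg_left hAE (mul_nonneg ha.le hC0)
  have h3 : q * B2 ≤ q * C := mul_le_mul_of_nonneg_left hB2C hq
  have h4 : a * C * E + q * C ≤ C * (1 + q) * (1 + a) * (1 + E) := by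
    nlinarith [mul_nonneg hC0 ha.le, mul_nonneg (mul_nonneg hC0 ha.le) hq,
      mul_nonneg hC0 hE0, mul_nonneg (mul_nonneg hC0 hq) hE0,
      mul_nonneg (mul_nonneg (mul_nonneg hC0 ha.le) hq) hE0,
      mul_nonneg hC0 hq]
  linarith


private lemma aux_E (k σ1 σ2 ρ ε m sg : ℝ) (hk : 0 < k) (hσ1 : 0 < σ1)
    (hσ2 : 0 < σ2) (hρ1 : -1 ≤ ρ) (hρ2 : ρ ≤ 1) (hm0 : 0 < m) (hm1 : m ≤ 1)
    (hsg0 : 0 ≤ sg) (hsg1 : sg ≤ σ2 ^ 2 / (2 * k)) :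
    m * ε + sg / 2 + (ρ / k) * σ1 * σ2 * (1 - m)
      ≤ |ε| + (σ2 ^ 2 / (4 * k) + σ1 * σ2 / k) := by
  have hmε : m * ε ≤ |ε| := by
    nlinarith [mul_nonneg hm0.le (sub_nonneg.mpr (le_abs_self ε)),
      mul_nonneg (sub_nonneg.mpr hm1) (abs_nonneg ε)]
  have hρm : ρ * (1 - m) ≤ 1 := by nlinarith
  have h0 : (0:ℝ) ≤ σ1 * σ2 / k := by positivity
  have h1 := mul_le_mul_of_nonneg_left hρm h0
  have hhalf : σ2 ^ 2 / (2 * k) / 2 = σ2 ^ 2 / (4 * k) := by ring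
  have h2 : (ρ / k) * σ1 * σ2 * (1 - m) = σ1 * σ2 / k * (ρ * (1 - m)) := by ring
  linarith

private lemma aux_P (k σ1 σ2 μ1 ρ φ2 ε m sg : ℝ) (hk : 0 < k) (hσ1 : 0 < σ1)
    (hσ2 : 0 < σ2) (hμ1 : 0 < μ1) (hρ1 : -1 ≤ ρ) (hρ2 : ρ ≤ 1) (hφ2 : 0 ≤ φ2)
    (hm0 : 0 < m) (hm1 : m ≤ 1) (hsg0 : 0 ≤ sg) (hsg1 : sg ≤ σ2 ^ 2 / (2 * k)) :
    |k * m * ε + k * sg - σ2 ^ 2 / 2 - ρ * σ1 * σ2 * m - μ1 + φ2|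
      ≤ k * |ε| + (σ2 ^ 2 + σ1 * σ2 + μ1 + φ2) := by
  have hmε : m * ε ≤ |ε| := by
    nlinarith [mul_nonneg hm0.le (sub_nonneg.mpr (le_abs_self ε)),
      mul_nonneg (sub_nonneg.mpr hm1) (abs_nonneg ε)]
  have hmε' : -|ε| ≤ m * ε := by
    nlinarith [mul_nonneg hm0.le (by linarith [neg_abs_le ε] : (0:ℝ) ≤ ε + |ε|),
      mul_nonneg (sub_nonneg.mpr hm1) (abs_nonneg ε)]
  have hρσ1 : ρ * σ1 * σ2 * m ≤ σ1 * σ2 := by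
    have h1 : ρ * m ≤ 1 := by nlinarith
    nlinarith [mul_le_mul_of_nonneg_left h1 (mul_nonneg hσ1.le hσ2.le)]
  have hρσ2 : -(σ1 * σ2) ≤ ρ * σ1 * σ2 * m := by
    have h1 : (-1:ℝ) ≤ ρ * m := by nlinarith
    nlinarith [mul_le_mul_of_nonneg_left h1 (mul_nonneg hσ1.le hσ2.le)]
  have hksg : k * sg ≤ σ2 ^ 2 / 2 := by
    have h1 := mul_le_mul_of_nonneg_left hsg1 hk.le
    have h2 : k * (σ2 ^ 2 / (2 * k)) = σ2 ^ 2 / 2 := by field_simp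
    linarith
  have hkmε := mul_le_mul_of_nonneg_left hmε hk.le
  have hkmε' := mul_le_mul_of_nonneg_left hmε' hk.le
  have hksg0 : 0 ≤ k * sg := mul_nonneg hk.le hsg0
  have hsq : (0:ℝ) ≤ σ2 ^ 2 := sq_nonneg σ2
  rw [abs_le]
  constructor
  · nlinarith
  · nlinarith

/-- Growth bound on the candidate optimal liquidation rate `c*`:
`|c*(t, a, ε, q)| ≤ C (1 + q)(1 + a)(1 + e^{C|ε|})`. -/
theorem cstar_growth_bound (k σ1 σ2 μ1 ρ η φ1 φ2 φ3 χ T Q0bar : ℝ)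
    (hk : 0 < k) (hσ1 : 0 < σ1) (hσ2 : 0 < σ2) (hμ1 : 0 < μ1)
    (hρ : ρ ∈ Set.Icc (-1 : ℝ) 1) (hη : 0 < η) (hφ1 : 0 < φ1) (hφ2 : 0 ≤ φ2)
    (hφ3 : 0 ≤ φ3) (hχ : 0 < χ) (hT : 0 < T) (hQ0bar : 0 < Q0bar)
    (g3 : ℝ → ℝ) (mubar sigbarSq : ℝ → ℝ) (ghat : ℝ → ℝ → ℝ) (g2 : ℝ → ℝ → ℝ)
    (cstar : ℝ → ℝ → ℝ → ℝ → ℝ)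
    (hg3 : ∀ t, g3 t =
      Real.sqrt (φ1 * η) *
        (Real.exp (2 * t * Real.sqrt (φ1 / η)) * (Real.sqrt (φ1 * η) - χ)
          - Real.exp (2 * T * Real.sqrt (φ1 / η)) * (Real.sqrt (φ1 * η) + χ)) /
        (Real.exp (2 * t * Real.sqrt (φ1 / η)) * (Real.sqrt (φ1 * η) - χ)
          + Real.exp (2 * T * Real.sqrt (φ1 / η)) * (Real.sqrt (φ1 * η) + χ)))
    (hmubar : ∀ s, mubar s = Real.exp (-k * s))
    (hsigbarSq : ∀ s, sigbarSq s = σ2 ^ 2 / (2 * k) * (1 - Real.exp (-2 * k * s)))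
    (hghat : ∀ t r, ghat r t =
      Real.exp ((1 / η) * (∫ s in t..r, g3 s) + μ1 * (r - t)))
    (hg2 : ∀ t ε, g2 t ε =
      1 - φ3 * Real.exp (-ε) * (∫ r in t..T, ghat r t)
        - Real.exp (-ε) * ∫ r in t..T, ghat r t *
            Real.exp (mubar (r - t) * ε + sigbarSq (r - t) / 2
              + (ρ / k) * σ1 * σ2 * (1 - mubar (r - t))) *
            (k * mubar (r - t) * ε + k * sigbarSq (r - t) - σ2 ^ 2 / 2
              - ρ * σ1 * σ2 * mubar (r - t) - μ1 + φ2))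
    (hcstar_pos : ∀ t a ε q, 0 < q → cstar t a ε q =
      1 / (2 * η) * (a * Real.exp ε * (1 - g2 t ε) - 2 * q * g3 t))
    (hcstar_zero : ∀ t a ε, cstar t a ε 0 = 0) :
    ∃ C : ℝ, 0 < C ∧ ∀ t ∈ Set.Icc (0 : ℝ) T, ∀ a : ℝ, 0 < a →
      ∀ ε : ℝ, ∀ q ∈ Set.Icc (0 : ℝ) Q0bar,
        |cstar t a ε q| ≤ C * (1 + q) * (1 + a) * (1 + Real.exp (C * |ε|)) := by
  obtain ⟨hρ1, hρ2⟩ := hρ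
  have hφ1η : (0:ℝ) < φ1 * η := by positivity
  have hlam0 : (0:ℝ) ≤ Real.sqrt (φ1 / η) := Real.sqrt_nonneg _
  have hs0 : (0:ℝ) < Real.sqrt (φ1 * η) := Real.sqrt_pos.mpr hφ1η
  set lam := Real.sqrt (φ1 / η) with hlamdef
  set s := Real.sqrt (φ1 * η) with hsdef
  set v := Real.exp (2 * T * lam) with hvdef
  have hv1 : (1:ℝ) ≤ v := by rw [hvdef]; exact Real.one_le_exp (by positivity)
  have hv0 : (0:ℝ) < v := lt_of_lt_of_le one_pos hv1
  set B3 : ℝ := 2 * v * (s + χ) with hB3def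
  have hB3pos : (0:ℝ) < B3 := by rw [hB3def]; positivity
  -- bound on g3
  have hg3bound : ∀ x ∈ Set.Icc (0:ℝ) T, |g3 x| ≤ B3 := by
    rintro x ⟨hx0, hxT⟩
    have hu1 : (1:ℝ) ≤ Real.exp (2 * x * lam) := Real.one_le_exp (by positivity)
    have huv : Real.exp (2 * x * lam) ≤ v := by
      rw [hvdef]; exact Real.exp_le_exp.mpr (by nlinarith)
    rw [hg3 x]
    set u := Real.exp (2 * x * lam) with hudef
    have hu0 : (0:ℝ) < u := lt_of_lt_of_le one_pos hu1
    have hD : s ≤ u * (s - χ) + v * (s + χ) := by nlinarith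
    have hDpos : (0:ℝ) < u * (s - χ) + v * (s + χ) := lt_of_lt_of_le hs0 hD
    have hN : |u * (s - χ) - v * (s + χ)| ≤ B3 := by
      rw [hB3def, abs_le]; constructor <;> nlinarith
    rw [abs_div, abs_mul, abs_of_pos hDpos, abs_of_nonneg hs0.le, div_le_iff₀ hDpos]
    nlinarith [abs_nonneg (u * (s - χ) - v * (s + χ)),
      mul_le_mul_of_nonneg_left hN hs0.le]
  -- bound on ghat
  set G := Real.exp (B3 / η * T + μ1 * T) with hGdef
  have hG1 : (1:ℝ) ≤ G := by
    rw [hGdef]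
    refine Real.one_le_exp ?_
    have : (0:ℝ) ≤ B3 / η * T := by
      apply mul_nonneg (div_nonneg hB3pos.le hη.le) hT.le
    nlinarith
  have hG0 : (0:ℝ) < G := lt_of_lt_of_le one_pos hG1
  have hghatbound : ∀ t, 0 ≤ t → ∀ r, t < r → r ≤ T → |ghat r t| ≤ G := by
    intro t ht0 r htr hrT
    have hint : ‖∫ x in t..r, g3 x‖ ≤ B3 * |r - t| := by
      apply intervalIntegral.norm_integral_le_of_norm_le_const
      intro x hx
      rw [Set.uIoc_of_le htr.le] at hx
      rw [Real.norm_eq_abs]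
      exact hg3bound x ⟨le_trans ht0 hx.1.le, le_trans hx.2 hrT⟩
    rw [Real.norm_eq_abs] at hint
    have habs : |r - t| = r - t := abs_of_pos (by linarith)
    rw [habs] at hint
    have hIle : (∫ x in t..r, g3 x) ≤ B3 * T := by
      have h1 := le_trans (le_abs_self (∫ x in t..r, g3 x)) hint
      have h2 : B3 * (r - t) ≤ B3 * T :=
        mul_le_mul_of_nonneg_left (by linarith) hB3pos.le
      linarith
    have hexp : (1 / η) * (∫ x in t..r, g3 x) + μ1 * (r - t) ≤ B3 / η * T + μ1 * T := by
      have h3 := mul_le_mul_of_nonneg_left hIle (by positivity : (0:ℝ) ≤ 1 / η)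
      have h4 : μ1 * (r - t) ≤ μ1 * T :=
        mul_le_mul_of_nonneg_left (by linarith) hμ1.le
      have h5 : (1:ℝ) / η * (B3 * T) = B3 / η * T := by ring
      linarith
    rw [hghat t r, abs_of_pos (Real.exp_pos _), hGdef]
    exact Real.exp_le_exp.mpr hexp
  -- constants
  set K1 := σ2 ^ 2 / (4 * k) + σ1 * σ2 / k with hK1def
  set K2 := σ2 ^ 2 + σ1 * σ2 + μ1 + φ2 with hK2def
  have hK2pos : (0:ℝ) < K2 := by rw [hK2def]; positivity
  set M := φ3 * G * T + G * Real.exp K1 * T * (k + K2) with hMdef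
  have hMpos : (0:ℝ) < M := by
    rw [hMdef]
    have h1 : (0:ℝ) ≤ φ3 * G * T := by positivity
    have h2 : (0:ℝ) < G * Real.exp K1 * T * (k + K2) := by positivity
    linarith
  set C := 2 + M / (2 * η) + B3 / η with hCdef
  have hM2η : (0:ℝ) ≤ M / (2 * η) := div_nonneg hMpos.le (by positivity)
  have hB3η : (0:ℝ) ≤ B3 / η := div_nonneg hB3pos.le hη.le
  have hC2 : (2:ℝ) ≤ C := by rw [hCdef]; linarith
  have hC0 : (0:ℝ) < C := by linarith
  have hCM : M / (2 * η) ≤ C := by rw [hCdef]; linarith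
  have hCB : B3 / η ≤ C := by rw [hCdef]; linarith
  refine ⟨C, hC0, ?_⟩
  rintro t ⟨ht0, htT⟩ a ha ε q ⟨hq0, hqQ⟩
  have hEC1 : (1:ℝ) ≤ Real.exp (C * |ε|) :=
    Real.one_le_exp (mul_nonneg hC0.le (abs_nonneg ε))
  rcases hq0.eq_or_lt with hq | hqpos
  · rw [← hq, hcstar_zero, abs_zero]
    have h1 : (0:ℝ) ≤ 1 + Real.exp (C * |ε|) := by linarith
    have h2 : (0:ℝ) ≤ C * (1 + 0) * (1 + a) :=
      mul_nonneg (mul_nonneg hC0.le (by norm_num)) (by linarith)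
    exact mul_nonneg h2 h1
  · rw [hcstar_pos t a ε q hqpos]
    set A := Real.exp |ε| with hAdef
    have hA1 : (1:ℝ) ≤ A := by rw [hAdef]; exact Real.one_le_exp (abs_nonneg ε)
    have hA0 : (0:ℝ) < A := lt_of_lt_of_le one_pos hA1
    -- pointwise bound on the second integrand
    have hP : ∀ r, t < r → r ≤ T →
        |ghat r t *
            Real.exp (mubar (r - t) * ε + sigbarSq (r - t) / 2
              + (ρ / k) * σ1 * σ2 * (1 - mubar (r - t))) *
            (k * mubar (r - t) * ε + k * sigbarSq (r - t) - σ2 ^ 2 / 2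
              - ρ * σ1 * σ2 * mubar (r - t) - μ1 + φ2)|
          ≤ G * (A * Real.exp K1) * (k * |ε| + K2) := by
      intro r htr hrT
      have hm0 : (0:ℝ) < mubar (r - t) := by rw [hmubar]; exact Real.exp_pos _
      have hkrt : (0:ℝ) ≤ k * (r - t) := mul_nonneg hk.le (by linarith)
      have hkrt2 : (0:ℝ) ≤ 2 * k * (r - t) := by linarith
      have hm1 : mubar (r - t) ≤ 1 := by
        rw [hmubar]
        calc Real.exp (-k * (r - t)) ≤ Real.exp 0 :=
              Real.exp_le_exp.mpr (by linarith)
          _ = 1 := Real.exp_zero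
      have hexp1 : Real.exp (-2 * k * (r - t)) ≤ 1 := by
        calc Real.exp (-2 * k * (r - t)) ≤ Real.exp 0 :=
              Real.exp_le_exp.mpr (by linarith)
          _ = 1 := Real.exp_zero
      have hqq2 : (0:ℝ) < σ2 ^ 2 / (2 * k) := by positivity
      have hsg0 : (0:ℝ) ≤ sigbarSq (r - t) := by
        rw [hsigbarSq]
        exact mul_nonneg hqq2.le (by linarith)
      have hsg1 : sigbarSq (r - t) ≤ σ2 ^ 2 / (2 * k) := by
        rw [hsigbarSq]
        exact mul_le_of_le_one_right hqq2.le
          (by linarith [Real.exp_pos (-2 * k * (r - t))])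
      have hEexp : mubar (r - t) * ε + sigbarSq (r - t) / 2
          + (ρ / k) * σ1 * σ2 * (1 - mubar (r - t)) ≤ |ε| + K1 := by
        rw [hK1def]
        exact aux_E k σ1 σ2 ρ ε (mubar (r - t)) (sigbarSq (r - t))
          hk hσ1 hσ2 hρ1 hρ2 hm0 hm1 hsg0 hsg1
      have hPabs : |k * mubar (r - t) * ε + k * sigbarSq (r - t) - σ2 ^ 2 / 2
          - ρ * σ1 * σ2 * mubar (r - t) - μ1 + φ2| ≤ k * |ε| + K2 := by
        rw [hK2def]
        exact aux_P k σ1 σ2 μ1 ρ φ2 ε (mubar (r - t)) (sigbarSq (r - t))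
          hk hσ1 hσ2 hμ1 hρ1 hρ2 hφ2 hm0 hm1 hsg0 hsg1
      have hghG : |ghat r t| ≤ G := hghatbound t ht0 r htr hrT
      have hexpE : |Real.exp (mubar (r - t) * ε + sigbarSq (r - t) / 2
          + (ρ / k) * σ1 * σ2 * (1 - mubar (r - t)))| ≤ A * Real.exp K1 := by
        rw [abs_of_pos (Real.exp_pos _), hAdef, ← Real.exp_add]
        exact Real.exp_le_exp.mpr hEexp
      rw [abs_mul, abs_mul]
      have hnn1 : (0:ℝ) ≤ A * Real.exp K1 := by positivity
      have hnn2 : (0:ℝ) ≤ G * (A * Real.exp K1) := mul_nonneg hG0.le hnn1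
      exact mul_le_mul (mul_le_mul hghG hexpE (abs_nonneg _) hG0.le) hPabs
        (abs_nonneg _) hnn2
    -- integral bounds
    have hI1 : |∫ r in t..T, ghat r t| ≤ G * T := by
      have h : ‖∫ r in t..T, ghat r t‖ ≤ G * |T - t| := by
        apply intervalIntegral.norm_integral_le_of_norm_le_const
        intro x hx
        rw [Set.uIoc_of_le htT] at hx
        rw [Real.norm_eq_abs]
        exact hghatbound t ht0 x hx.1 hx.2
      rw [Real.norm_eq_abs, abs_of_nonneg (by linarith : (0:ℝ) ≤ T - t)] at h
      have h2 : G * (T - t) ≤ G * T :=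
        mul_le_mul_of_nonneg_left (by linarith) hG0.le
      exact h.trans h2
    have hI2 : |∫ r in t..T, ghat r t *
            Real.exp (mubar (r - t) * ε + sigbarSq (r - t) / 2
              + (ρ / k) * σ1 * σ2 * (1 - mubar (r - t))) *
            (k * mubar (r - t) * ε + k * sigbarSq (r - t) - σ2 ^ 2 / 2
              - ρ * σ1 * σ2 * mubar (r - t) - μ1 + φ2)|
          ≤ G * (A * Real.exp K1) * (k * |ε| + K2) * T := by
      have h : ‖∫ r in t..T, ghat r t *
            Real.exp (mubar (r - t) * ε + sigbarSq (r - t) / 2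
              + (ρ / k) * σ1 * σ2 * (1 - mubar (r - t))) *
            (k * mubar (r - t) * ε + k * sigbarSq (r - t) - σ2 ^ 2 / 2
              - ρ * σ1 * σ2 * mubar (r - t) - μ1 + φ2)‖
          ≤ G * (A * Real.exp K1) * (k * |ε| + K2) * |T - t| := by
        apply intervalIntegral.norm_integral_le_of_norm_le_const
        intro x hx
        rw [Set.uIoc_of_le htT] at hx
        rw [Real.norm_eq_abs]
        exact hP x hx.1 hx.2
      rw [Real.norm_eq_abs, abs_of_nonneg (by linarith : (0:ℝ) ≤ T - t)] at h
      have hnn : (0:ℝ) ≤ G * (A * Real.exp K1) * (k * |ε| + K2) := by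
        have : (0:ℝ) ≤ k * |ε| + K2 := by
          have := abs_nonneg ε; nlinarith
        have h1 : (0:ℝ) ≤ A * Real.exp K1 := by positivity
        exact mul_nonneg (mul_nonneg hG0.le h1) this
      have h2 : G * (A * Real.exp K1) * (k * |ε| + K2) * (T - t)
          ≤ G * (A * Real.exp K1) * (k * |ε| + K2) * T :=
        mul_le_mul_of_nonneg_left (by linarith) hnn
      exact h.trans h2
    -- bound on 1 - g2
    have he : (0:ℝ) ≤ Real.exp (-ε) := (Real.exp_pos _).le
    have h1g2 : 1 - g2 t ε = φ3 * Real.exp (-ε) * (∫ r in t..T, ghat r t)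
        + Real.exp (-ε) * ∫ r in t..T, ghat r t *
            Real.exp (mubar (r - t) * ε + sigbarSq (r - t) / 2
              + (ρ / k) * σ1 * σ2 * (1 - mubar (r - t))) *
            (k * mubar (r - t) * ε + k * sigbarSq (r - t) - σ2 ^ 2 / 2
              - ρ * σ1 * σ2 * mubar (r - t) - μ1 + φ2) := by
      rw [hg2]; ring
    have hW : |1 - g2 t ε| ≤ Real.exp (-ε) *
        (φ3 * (G * T) + G * (A * Real.exp K1) * (k * |ε| + K2) * T) := by
      rw [h1g2]
      have e1 : |φ3 * Real.exp (-ε) * (∫ r in t..T, ghat r t)|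
          ≤ φ3 * Real.exp (-ε) * (G * T) := by
        rw [abs_mul, abs_of_nonneg (mul_nonneg hφ3 he)]
        exact mul_le_mul_of_nonneg_left hI1 (mul_nonneg hφ3 he)
      have e2 : |Real.exp (-ε) * ∫ r in t..T, ghat r t *
            Real.exp (mubar (r - t) * ε + sigbarSq (r - t) / 2
              + (ρ / k) * σ1 * σ2 * (1 - mubar (r - t))) *
            (k * mubar (r - t) * ε + k * sigbarSq (r - t) - σ2 ^ 2 / 2
              - ρ * σ1 * σ2 * mubar (r - t) - μ1 + φ2)|
          ≤ Real.exp (-ε) * (G * (A * Real.exp K1) * (k * |ε| + K2) * T) := by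
        rw [abs_mul, abs_of_nonneg he]
        exact mul_le_mul_of_nonneg_left hI2 he
      calc |φ3 * Real.exp (-ε) * (∫ r in t..T, ghat r t)
            + Real.exp (-ε) * ∫ r in t..T, ghat r t *
            Real.exp (mubar (r - t) * ε + sigbarSq (r - t) / 2
              + (ρ / k) * σ1 * σ2 * (1 - mubar (r - t))) *
            (k * mubar (r - t) * ε + k * sigbarSq (r - t) - σ2 ^ 2 / 2
              - ρ * σ1 * σ2 * mubar (r - t) - μ1 + φ2)| ≤ _ := abs_add_le _ _
        _ ≤ Real.exp (-ε) *
            (φ3 * (G * T) + G * (A * Real.exp K1) * (k * |ε| + K2) * T) := by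
          have h12 := add_le_add e1 e2
          have heq : φ3 * Real.exp (-ε) * (G * T)
              + Real.exp (-ε) * (G * (A * Real.exp K1) * (k * |ε| + K2) * T)
              = Real.exp (-ε) *
                (φ3 * (G * T) + G * (A * Real.exp K1) * (k * |ε| + K2) * T) := by
            ring
          rw [heq] at h12
          exact h12
    -- core bound
    have hεA : |ε| + 1 ≤ A := by
      rw [hAdef]; exact Real.add_one_le_exp |ε|
    have hW2 : φ3 * (G * T) + G * (A * Real.exp K1) * (k * |ε| + K2) * T
        ≤ M * (A * A) := by
      rw [hMdef]
      exact aux_W2 φ3 G (Real.exp K1) T k K2 |ε| A hφ3 hG0 (Real.exp_pos K1)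
        hT hk hK2pos (abs_nonneg ε) hA1 hεA
    have hcore : |a * Real.exp ε * (1 - g2 t ε)| ≤ a * (M * (A * A)) := by
      have hee : Real.exp ε * Real.exp (-ε) = 1 := by
        rw [← Real.exp_add]; simp
      rw [abs_mul, abs_of_nonneg (mul_nonneg ha.le (Real.exp_pos ε).le)]
      have h2 := mul_le_mul_of_nonneg_left hW
        (mul_nonneg ha.le (Real.exp_pos ε).le)
      have h3 : a * Real.exp ε * (Real.exp (-ε) *
          (φ3 * (G * T) + G * (A * Real.exp K1) * (k * |ε| + K2) * T))
          = a * (φ3 * (G * T) + G * (A * Real.exp K1) * (k * |ε| + K2) * T) := by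
        have : a * Real.exp ε * (Real.exp (-ε) * (φ3 * (G * T)
            + G * (A * Real.exp K1) * (k * |ε| + K2) * T))
            = a * (Real.exp ε * Real.exp (-ε)) * (φ3 * (G * T)
            + G * (A * Real.exp K1) * (k * |ε| + K2) * T) := by ring
        rw [this, hee]; ring
      rw [h3] at h2
      have h4 := mul_le_mul_of_nonneg_left hW2 ha.le
      exact h2.trans h4
    -- g3 part
    have hg3t : |2 * q * g3 t| ≤ 2 * q * B3 := by
      rw [abs_mul, abs_of_nonneg (by linarith : (0:ℝ) ≤ 2 * q)]
      exact mul_le_mul_of_nonneg_left (hg3bound t ⟨ht0, htT⟩) (by linarith)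
    -- assemble
    have hfinal : |1 / (2 * η) * (a * Real.exp ε * (1 - g2 t ε) - 2 * q * g3 t)|
        ≤ 1 / (2 * η) * (a * (M * (A * A)) + 2 * q * B3) := by
      rw [abs_mul, abs_of_nonneg (by positivity : (0:ℝ) ≤ 1 / (2 * η))]
      apply mul_le_mul_of_nonneg_left _ (by positivity : (0:ℝ) ≤ 1 / (2 * η))
      calc |a * Real.exp ε * (1 - g2 t ε) - 2 * q * g3 t|
          ≤ |a * Real.exp ε * (1 - g2 t ε)| + |2 * q * g3 t| := abs_sub _ _
        _ ≤ a * (M * (A * A)) + 2 * q * B3 := add_le_add hcore hg3t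
    have hsplit : 1 / (2 * η) * (a * (M * (A * A)) + 2 * q * B3)
        = a * (M / (2 * η)) * (A * A) + q * (B3 / η) := by
      field_simp
    have hE2C : A * A ≤ Real.exp (C * |ε|) := by
      have hAA : A * A = Real.exp (2 * |ε|) := by
        rw [hAdef, ← Real.exp_add]; ring_nf
      rw [hAA]
      exact Real.exp_le_exp.mpr (by
        have := mul_le_mul_of_nonneg_right hC2 (abs_nonneg ε)
        linarith)
    calc |1 / (2 * η) * (a * Real.exp ε * (1 - g2 t ε) - 2 * q * g3 t)|
        ≤ 1 / (2 * η) * (a * (M * (A * A)) + 2 * q * B3) := hfinal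
      _ = a * (M / (2 * η)) * (A * A) + q * (B3 / η) := hsplit
      _ ≤ C * (1 + q) * (1 + a) * (1 + Real.exp (C * |ε|)) :=
          aux_final C a q A (Real.exp (C * |ε|)) (M / (2 * η)) (B3 / η)
            hC2 ha hq0 hA1 hEC1 hE2C hM2η hCM hB3η hCB
end

section
/- Fix real parameters k > 0, σ1 > 0, σ2 > 0, μ1 > 0, ρ ∈ [−1, 1], let s > 0 and ε0 ∈ ℝ. Define μ̃(u) = −k·ε0·e^{−k u} + μ1 + (σ2²/2)·e^{−2 k u} + ρ·σ1·σ2·e^{−k u}, σ̃(u)² = σ1² + σ2²·e^{−2 k u} + 2·ρ·σ1·σ2·e^{−k u}, m(r) = ln s + (μ1 − σ1²/2)·r + ε0·(e^{−k r} − 1), and v(r) = σ1²·r + (σ2²/(2k))·(1 − e^{−2 k r}) + (2 ρ σ1 σ2 / k)·(1 − e^{−k r}). Then for every r ≥ 0: exp(m(r) + v(r)/2) = s · exp(∫_0^r μ̃(u) du) and exp(2·m(r) + 2·v(r)) = s² · exp(∫_0^r (2·μ̃(u) + σ̃(u)²) du). -/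
open Real

private lemma exp_deriv_aux (c x : ℝ) : HasDerivAt (fun u : ℝ => Real.exp (c * u)) (c * Real.exp (c * x)) x := by
  have h := (Real.hasDerivAt_exp (c * x)).comp x ((hasDerivAt_id x).const_mul c)
  exact h.congr_deriv (by simp [mul_comm])

/-- Moment matching: the geometric Brownian motion with time-dependent drift `μ̃` and
volatility `σ̃`, started at `s = a e^{ε0}`, matches the first two moments of
`S_r = A_r e^{ε_r}` for every `r ≥ 0`. -/
theorem gbm_moment_matching (k σ1 σ2 μ1 ρ s ε0 : ℝ)
    (hk : 0 < k) (hσ1 : 0 < σ1) (hσ2 : 0 < σ2) (hμ1 : 0 < μ1)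
    (hρ : ρ ∈ Set.Icc (-1 : ℝ) 1) (hs : 0 < s)
    (mutilde sigtildeSq m v : ℝ → ℝ)
    (hmutilde : ∀ u, mutilde u = -k * ε0 * Real.exp (-k * u) + μ1
      + σ2 ^ 2 / 2 * Real.exp (-2 * k * u) + ρ * σ1 * σ2 * Real.exp (-k * u))
    (hsigtildeSq : ∀ u, sigtildeSq u = σ1 ^ 2 + σ2 ^ 2 * Real.exp (-2 * k * u)
      + 2 * ρ * σ1 * σ2 * Real.exp (-k * u))
    (hm : ∀ r, m r = Real.log s + (μ1 - σ1 ^ 2 / 2) * r + ε0 * (Real.exp (-k * r) - 1))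
    (hv : ∀ r, v r = σ1 ^ 2 * r + σ2 ^ 2 / (2 * k) * (1 - Real.exp (-2 * k * r))
      + 2 * ρ * σ1 * σ2 / k * (1 - Real.exp (-k * r))) :
    ∀ r : ℝ, 0 ≤ r →
      Real.exp (m r + v r / 2) = s * Real.exp (∫ u in (0:ℝ)..r, mutilde u) ∧
      Real.exp (2 * m r + 2 * v r)
        = s ^ 2 * Real.exp (∫ u in (0:ℝ)..r, (2 * mutilde u + sigtildeSq u)) := by
  intro r hr
  have hk0 : k ≠ 0 := ne_of_gt hk
  -- antiderivative of mutilde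
  set F : ℝ → ℝ := fun u => ε0 * Real.exp (-k * u) + μ1 * u
      - σ2 ^ 2 / (4 * k) * Real.exp (-2 * k * u) - ρ * σ1 * σ2 / k * Real.exp (-k * u) with hF
  have hFd : ∀ x ∈ Set.uIcc (0:ℝ) r, HasDerivAt F (mutilde x) x := by
    intro x _
    have h1 := (exp_deriv_aux (-k) x).const_mul ε0
    have h2 : HasDerivAt (fun u : ℝ => μ1 * u) μ1 x := by
      simpa using (hasDerivAt_id x).const_mul μ1
    have h3 := (exp_deriv_aux (-2 * k) x).const_mul (σ2 ^ 2 / (4 * k))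
    have h4 := (exp_deriv_aux (-k) x).const_mul (ρ * σ1 * σ2 / k)
    have h := ((h1.add h2).sub h3).sub h4
    rw [hmutilde]
    refine h.congr_deriv ?_
    field_simp
    ring
  have hcont : ContinuousOn (fun u => mutilde u) (Set.uIcc (0:ℝ) r) := by
    have : Continuous (fun u : ℝ => -k * ε0 * Real.exp (-k * u) + μ1
      + σ2 ^ 2 / 2 * Real.exp (-2 * k * u) + ρ * σ1 * σ2 * Real.exp (-k * u)) := by
      fun_prop
    have heq : (fun u => mutilde u) = (fun u : ℝ => -k * ε0 * Real.exp (-k * u) + μ1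
      + σ2 ^ 2 / 2 * Real.exp (-2 * k * u) + ρ * σ1 * σ2 * Real.exp (-k * u)) := by
      funext u; exact hmutilde u
    rw [heq]; exact this.continuousOn
  have hI1 : (∫ u in (0:ℝ)..r, mutilde u) = F r - F 0 :=
    intervalIntegral.integral_eq_sub_of_hasDerivAt hFd
      (hcont.intervalIntegrable)
  -- antiderivative of 2*mutilde + sigtildeSq
  set G : ℝ → ℝ := fun u => 2 * F u + σ1 ^ 2 * u
      - σ2 ^ 2 / (2 * k) * Real.exp (-2 * k * u) - 2 * ρ * σ1 * σ2 / k * Real.exp (-k * u) with hG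
  have hGd : ∀ x ∈ Set.uIcc (0:ℝ) r, HasDerivAt G (2 * mutilde x + sigtildeSq x) x := by
    intro x hx
    have h0 := (hFd x hx).const_mul (2:ℝ)
    have h2 : HasDerivAt (fun u : ℝ => σ1 ^ 2 * u) (σ1 ^ 2) x := by
      simpa using (hasDerivAt_id x).const_mul (σ1 ^ 2)
    have h3 := (exp_deriv_aux (-2 * k) x).const_mul (σ2 ^ 2 / (2 * k))
    have h4 := (exp_deriv_aux (-k) x).const_mul (2 * ρ * σ1 * σ2 / k)
    have h := ((h0.add h2).sub h3).sub h4
    rw [hsigtildeSq]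
    refine h.congr_deriv ?_
    field_simp
    ring
  have hcont2 : ContinuousOn (fun u => 2 * mutilde u + sigtildeSq u) (Set.uIcc (0:ℝ) r) := by
    have heq : (fun u => 2 * mutilde u + sigtildeSq u) = (fun u : ℝ =>
        2 * (-k * ε0 * Real.exp (-k * u) + μ1
      + σ2 ^ 2 / 2 * Real.exp (-2 * k * u) + ρ * σ1 * σ2 * Real.exp (-k * u))
      + (σ1 ^ 2 + σ2 ^ 2 * Real.exp (-2 * k * u)
      + 2 * ρ * σ1 * σ2 * Real.exp (-k * u))) := by
      funext u; rw [hmutilde, hsigtildeSq]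
    rw [heq]
    exact (by fun_prop : Continuous _).continuousOn
  have hI2 : (∫ u in (0:ℝ)..r, (2 * mutilde u + sigtildeSq u)) = G r - G 0 :=
    intervalIntegral.integral_eq_sub_of_hasDerivAt hGd (hcont2.intervalIntegrable)
  constructor
  · rw [hI1, ← Real.exp_log hs, ← Real.exp_add]
    congr 1
    rw [hm, hv, hF]
    field_simp
    simp only [mul_zero, neg_zero, Real.exp_zero]; ring
  · rw [hI2, show s ^ 2 = Real.exp (2 * Real.log s) by
      rw [show (2:ℝ) * Real.log s = Real.log s + Real.log s by ring, Real.exp_add,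
        Real.exp_log hs]; ring, ← Real.exp_add]
    congr 1
    rw [hm, hv, hG, hF]
    field_simp
    simp only [mul_zero, neg_zero, Real.exp_zero]; ring
end
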